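/- arXiv:2001.08932 — 9 statements merged into one kernel-verified Lean document; each statement's English description precedes it below -/
import Mathlib

section
/- Let G be a finite group and let m be the minimum of the orders of the maximal cyclic subgroups of G. Then the minimum degree of the enhanced power graph of G equals m - 1. -/
/-- The enhanced power graph of a group `G`: distinct `x, y` are adjacent iff they lie in a
common cyclic subgroup of `G`. -/
def enhancedPowerGraph (G : Type*) [Group G] : SimpleGraph G where
  Adj x y := x ≠ y ∧ ∃ z : G, x ∈ Subgroup.zpowers z ∧ y ∈ Subgroup.zpowers z
  symm := by
    constructor
    rintro x y ⟨hxy, z, hx, hy⟩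
    exact ⟨hxy.symm, z, hy, hx⟩
  loopless := by
    constructor
    rintro x ⟨hx, -⟩
    exact hx rfl

/-- The minimum degree of a finite graph. -/
noncomputable def minDeg {V : Type*} [Fintype V] (g : SimpleGraph V) : ℕ :=
  sInf {k | ∃ v : V, (g.neighborSet v).ncard = k}

/-- A set of vertices is independent if no two of its members are adjacent. -/
def IsIndepSet' {V : Type*} (g : SimpleGraph V) (s : Set V) : Prop :=
  s.Pairwise fun x y => ¬ g.Adj x y

/-- The independence number. -/
noncomputable def indepNum {V : Type*} (g : SimpleGraph V) : ℕ :=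
  sSup {k | ∃ s : Set V, IsIndepSet' g s ∧ s.ncard = k}

/-- A matching: a set of edges of `g`, no two of which share a vertex. -/
def IsMatching' {V : Type*} (g : SimpleGraph V) (M : Set (Sym2 V)) : Prop :=
  M ⊆ g.edgeSet ∧ M.Pairwise fun e f => ∀ v : V, v ∈ e → v ∉ f

/-- The matching number. -/
noncomputable def matchingNum {V : Type*} (g : SimpleGraph V) : ℕ :=
  sSup {k | ∃ M : Set (Sym2 V), IsMatching' g M ∧ M.ncard = k}

/-- An edge cover: a set of edges such that every vertex is incident to some edge of it. -/
def IsEdgeCover {V : Type*} (g : SimpleGraph V) (E : Set (Sym2 V)) : Prop :=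
  E ⊆ g.edgeSet ∧ ∀ v : V, ∃ e ∈ E, v ∈ e

/-- The edge covering number. -/
noncomputable def edgeCoverNum {V : Type*} (g : SimpleGraph V) : ℕ :=
  sInf {k | ∃ E : Set (Sym2 V), IsEdgeCover g E ∧ E.ncard = k}

/-- A vertex cover: a set of vertices containing an endpoint of every edge. -/
def IsVertexCover {V : Type*} (g : SimpleGraph V) (s : Set V) : Prop :=
  ∀ ⦃x y : V⦄, g.Adj x y → x ∈ s ∨ y ∈ s

/-- The vertex covering number. -/
noncomputable def vertexCoverNum {V : Type*} (g : SimpleGraph V) : ℕ :=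
  sInf {k | ∃ s : Set V, IsVertexCover g s ∧ s.ncard = k}

/-- The edge connectivity: the least size of a set of edges whose deletion disconnects. -/
noncomputable def edgeConnectivity {V : Type*} (g : SimpleGraph V) : ℕ :=
  sInf {k | ∃ S : Set (Sym2 V), S ⊆ g.edgeSet ∧ ¬ (g.deleteEdges S).Connected ∧ S.ncard = k}

/-- The strong metric dimension. -/
noncomputable def sdim {V : Type*} (g : SimpleGraph V) : ℕ :=
  sInf {k | ∃ U : Set V,
    (∀ u v : V, u ≠ v → ∃ z ∈ U,
      g.dist z u = g.dist z v + g.dist v u ∨ g.dist z v = g.dist z u + g.dist u v) ∧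
    U.ncard = k}

/-- The clique number. -/
noncomputable def cliqueNum' {V : Type*} (g : SimpleGraph V) : ℕ :=
  sSup {k | ∃ s : Finset V, g.IsNClique k s}

/-- A graph is perfect if every induced subgraph has chromatic number equal to clique number. -/
def IsPerfect {V : Type*} (g : SimpleGraph V) : Prop :=
  ∀ s : Set V, (g.induce s).chromaticNumber = (cliqueNum' (g.induce s) : ℕ∞)

/-- `H` is a maximal cyclic subgroup of `G`. -/
def IsMaximalCyclic {G : Type*} [Group G] (H : Subgroup G) : Prop :=
  (∃ g : G, H = Subgroup.zpowers g) ∧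
    ∀ K : Subgroup G, (∃ g : G, K = Subgroup.zpowers g) → H ≤ K → H = K

/-- For a finite group `G`, if `m` is the minimum of the orders of the
maximal cyclic subgroups of `G`, then the minimum degree of the enhanced power graph of `G`
is `m - 1`. -/
theorem stmt_0 {G : Type*} [Group G] [Fintype G] (m : ℕ)
    (hm : IsLeast {k | ∃ H : Subgroup G, IsMaximalCyclic H ∧ Nat.card H = k} m) :
    minDeg (enhancedPowerGraph G) = m - 1 := by
  obtain ⟨⟨H, hHmax, hHcard⟩, hlb⟩ := hm
  -- Lower bound: every degree is at least m - 1
  have hdeg : ∀ v : G, m - 1 ≤ ((enhancedPowerGraph G).neighborSet v).ncard := by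
    intro v
    set S : Set (Subgroup G) := {K | (∃ z : G, K = Subgroup.zpowers z) ∧ Subgroup.zpowers v ≤ K}
      with hS
    have hSne : Subgroup.zpowers v ∈ S := ⟨⟨v, rfl⟩, le_refl _⟩
    have hfin : S.Finite := Set.toFinite _
    obtain ⟨K, hKS, hKmax⟩ := Set.Finite.exists_maximalFor id S hfin ⟨_, hSne⟩
    have hKcyc : IsMaximalCyclic K :=
      ⟨hKS.1, fun K' hK' hle => le_antisymm hle (hKmax ⟨hK', hKS.2.trans hle⟩ hle)⟩
    have hmK : m ≤ Nat.card K := hlb ⟨K, hKcyc, rfl⟩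
    have hvK : v ∈ K := hKS.2 (Subgroup.mem_zpowers v)
    obtain ⟨z0, hz0⟩ := hKS.1
    have hsub : (K : Set G) \ {v} ⊆ (enhancedPowerGraph G).neighborSet v := by
      rintro y ⟨hyK, hyv⟩
      refine ⟨fun h => hyv (by simpa using h.symm), z0, ?_, ?_⟩
      · rw [← SetLike.mem_coe, ← hz0] at *; exact hvK
      · rw [← hz0]; exact hyK
    have hcard : ((K : Set G) \ {v}).ncard = Nat.card K - 1 := by
      rw [Set.ncard_diff_singleton_of_mem hvK, ← Nat.card_coe_set_eq,
        SetLike.coe_sort_coe]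
    calc m - 1 ≤ Nat.card K - 1 := Nat.sub_le_sub_right hmK 1
      _ = ((K : Set G) \ {v}).ncard := hcard.symm
      _ ≤ _ := Set.ncard_le_ncard hsub (Set.toFinite _)
  -- Upper bound: a generator of H has degree exactly m - 1
  obtain ⟨⟨g, hg⟩, hmax⟩ := hHmax
  have hns : (enhancedPowerGraph G).neighborSet g = (H : Set G) \ {g} := by
    ext y
    constructor
    · rintro ⟨hne, z, hgz, hyz⟩
      have hHz : H = Subgroup.zpowers z := by
        refine hmax _ ⟨z, rfl⟩ ?_
        rw [hg]
        exact (Subgroup.zpowers_le).2 hgz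
      refine ⟨?_, fun h => hne (by simpa using h.symm)⟩
      rw [SetLike.mem_coe, hHz]; exact hyz
    · rintro ⟨hyH, hyg⟩
      refine ⟨fun h => hyg (by simpa using h.symm), g, Subgroup.mem_zpowers g, ?_⟩
      rw [← hg]; exact hyH
  have hgH : g ∈ H := by rw [hg]; exact Subgroup.mem_zpowers g
  have hdg : ((enhancedPowerGraph G).neighborSet g).ncard = m - 1 := by
    rw [hns, Set.ncard_diff_singleton_of_mem hgH, ← Nat.card_coe_set_eq,
      SetLike.coe_sort_coe, hHcard]
  exact IsLeast.csInf_eq ⟨⟨g, hdg⟩, by rintro k ⟨v, rfl⟩; exact hdeg v⟩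
end

section
/- For any finite group G, the edge connectivity of the enhanced power graph of G equals its minimum degree; that is, the minimum cardinality of a set of edges whose deletion disconnects P_e(G) coincides with δ(P_e(G)). -/
-- isolated vertex after deleting incidence set
lemma aux_not_conn {V : Type*} (g : SimpleGraph V) (v w : V) (hw : w ≠ v) :
    ¬ (g.deleteEdges (g.incidenceSet v)).Connected := by
  intro hc
  obtain ⟨p⟩ := hc.preconnected v w
  cases p with
  | nil => exact hw rfl
  | cons h _ =>
    rw [SimpleGraph.deleteEdges_adj] at h
    exact h.2 ⟨(SimpleGraph.mem_edgeSet _).mpr h.1, Sym2.mem_mk_left _ _⟩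

-- λ ≤ deg v
lemma aux_le_deg {V : Type*} [Fintype V] (g : SimpleGraph V) (v w : V) (hw : w ≠ v) :
    edgeConnectivity g ≤ (g.neighborSet v).ncard := by
  classical
  apply Nat.sInf_le
  refine ⟨g.incidenceSet v, g.incidenceSet_subset v, aux_not_conn g v w hw, ?_⟩
  rw [← Nat.card_coe_set_eq, ← Nat.card_coe_set_eq]
  exact Nat.card_congr (g.incidenceSetEquivNeighborSet v)

-- δ ≤ |S| for any disconnecting edge set, given universal vertex u
lemma aux_ge {V : Type*} [Fintype V] (g : SimpleGraph V) (u : V)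
    (hu : ∀ x : V, x ≠ u → g.Adj u x)
    (S : Set (Sym2 V)) (hS : S ⊆ g.edgeSet) (hc : ¬ (g.deleteEdges S).Connected) :
    minDeg g ≤ S.ncard := by
  set g' := g.deleteEdges S with hg'
  have hne : Nonempty V := ⟨u⟩
  have hpc : ¬ g'.Preconnected := fun h => hc ⟨h⟩
  simp only [SimpleGraph.Preconnected, not_forall] at hpc
  obtain ⟨a, b, hab⟩ := hpc
  -- some vertex not reachable from u
  have hB : ∃ b : V, ¬ g'.Reachable u b := by
    by_contra h
    push_neg at h
    exact hab ((h a).symm.trans (h b))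
  obtain ⟨b, hb⟩ := hB
  have hbu : b ≠ u := fun h => hb (h ▸ (SimpleGraph.Reachable.refl u : g'.Reachable u u))
  set B : Set V := {x | ¬ g'.Reachable u x} with hBdef
  have huB : u ∉ B := fun h => h (SimpleGraph.Reachable.refl u)
  have hbB : b ∈ B := hb
  -- edges u-x for x ∈ B are in S
  have h1 : ∀ x ∈ B, s(u, x) ∈ S := by
    intro x hx
    by_contra h
    have hxu : x ≠ u := fun he => huB (he ▸ hx)
    have : g'.Adj u x := by
      rw [hg', SimpleGraph.deleteEdges_adj]
      exact ⟨hu x hxu, h⟩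
    exact hx this.reachable
  -- edges b-w for w ∉ B, w neighbor of b, are in S
  have h2 : ∀ w ∈ g.neighborSet b \ B, s(b, w) ∈ S := by
    rintro w ⟨hw, hwB⟩
    by_contra h
    have : g'.Adj b w := by
      rw [hg', SimpleGraph.deleteEdges_adj]
      exact ⟨hw, h⟩
    rw [hBdef, Set.mem_setOf_eq, not_not] at hwB
    exact hb (hwB.trans this.symm.reachable)
  set T1 : Set (Sym2 V) := (fun x => s(u, x)) '' (B \ {b}) with hT1
  set T2 : Set (Sym2 V) := (fun w => s(b, w)) '' (g.neighborSet b \ B) with hT2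
  have hT1S : T1 ⊆ S := by rintro e ⟨x, hx, rfl⟩; exact h1 x hx.1
  have hT2S : T2 ⊆ S := by rintro e ⟨w, hw, rfl⟩; exact h2 w hw
  have hdisj : Disjoint T1 T2 := by
    rw [Set.disjoint_left]
    rintro e ⟨x, hx, rfl⟩ ⟨w, hw, he⟩
    rw [Sym2.eq_iff] at he
    rcases he with ⟨h1', _⟩ | ⟨h1', h2'⟩
    · exact huB (h1' ▸ hbB)
    · exact hx.2 h1'.symm
  have hc1 : T1.ncard = (B \ {b}).ncard := by
    apply Set.ncard_image_of_injOn
    intro x hx y hy he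
    rw [Sym2.eq_iff] at he
    rcases he with ⟨_, h⟩ | ⟨h, h'⟩
    · exact h
    · exact h'.trans h
  have hc2 : T2.ncard = (g.neighborSet b \ B).ncard := by
    apply Set.ncard_image_of_injOn
    intro x hx y hy he
    rw [Sym2.eq_iff] at he
    rcases he with ⟨_, h⟩ | ⟨h, h'⟩
    · exact h
    · exact h'.trans h
  have hunion : (T1 ∪ T2).ncard = (B \ {b}).ncard + (g.neighborSet b \ B).ncard := by
    rw [Set.ncard_union_eq hdisj (Set.toFinite _) (Set.toFinite _), hc1, hc2]
  have hsub : T1 ∪ T2 ⊆ S := Set.union_subset hT1S hT2S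
  have hSge : (B \ {b}).ncard + (g.neighborSet b \ B).ncard ≤ S.ncard := by
    rw [← hunion]
    exact Set.ncard_le_ncard hsub (Set.toFinite _)
  -- deg b ≤ that sum
  have hdeg : (g.neighborSet b).ncard ≤ (B \ {b}).ncard + (g.neighborSet b \ B).ncard := by
    have hsplit : g.neighborSet b ⊆ (g.neighborSet b ∩ B) ∪ (g.neighborSet b \ B) := by
      intro x hx
      by_cases hxB : x ∈ B
      · exact Or.inl ⟨hx, hxB⟩
      · exact Or.inr ⟨hx, hxB⟩
    calc (g.neighborSet b).ncard
        ≤ ((g.neighborSet b ∩ B) ∪ (g.neighborSet b \ B)).ncard :=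
          Set.ncard_le_ncard hsplit (Set.toFinite _)
      _ ≤ (g.neighborSet b ∩ B).ncard + (g.neighborSet b \ B).ncard :=
          Set.ncard_union_le _ _
      _ ≤ (B \ {b}).ncard + (g.neighborSet b \ B).ncard := by
          gcongr
          · exact Set.toFinite _
          · rintro x ⟨hx1, hx2⟩
            exact ⟨hx2, fun hh => g.irrefl (hh ▸ hx1 : g.Adj b b)⟩
  exact le_trans (le_trans (Nat.sInf_le ⟨b, rfl⟩) hdeg) hSge


/-- For any finite group `G`, the edge connectivity of the enhanced power
graph of `G` equals its minimum degree. -/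
theorem stmt_1 {G : Type*} [Group G] [Fintype G] :
    edgeConnectivity (enhancedPowerGraph G) = minDeg (enhancedPowerGraph G) := by
  by_cases hs : Subsingleton G
  · -- trivial case: both 0
    have h1 : minDeg (enhancedPowerGraph G) = 0 := by
      apply Nat.sInf_eq_zero.2
      left
      refine ⟨1, ?_⟩
      convert Set.ncard_empty G
      ext x
      simp only [SimpleGraph.mem_neighborSet, Set.mem_empty_iff_false, iff_false]
      exact fun h => h.ne (Subsingleton.elim _ _)
    have h2 : edgeConnectivity (enhancedPowerGraph G) = 0 := by
      have : {k | ∃ S : Set (Sym2 G), S ⊆ (enhancedPowerGraph G).edgeSet ∧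
          ¬ ((enhancedPowerGraph G).deleteEdges S).Connected ∧ S.ncard = k} = ∅ := by
        ext k
        simp only [Set.mem_setOf_eq, Set.mem_empty_iff_false, iff_false]
        rintro ⟨S, _, hc, _⟩
        exact hc ⟨fun a b => (Subsingleton.elim a b ▸ SimpleGraph.Reachable.refl a)⟩
      rw [edgeConnectivity, this, Nat.sInf_empty]
    rw [h1, h2]
  · have : Nontrivial G := not_subsingleton_iff_nontrivial.1 hs
    obtain ⟨w, hw⟩ := exists_ne (1 : G)
    have hu : ∀ x : G, x ≠ 1 → (enhancedPowerGraph G).Adj 1 x := by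
      intro x hx
      exact ⟨fun h => hx h.symm, x, Subgroup.one_mem _, Subgroup.mem_zpowers x⟩
    apply le_antisymm
    · -- λ ≤ δ : minDeg attained at some v
      have hne : {k | ∃ v : G, ((enhancedPowerGraph G).neighborSet v).ncard = k}.Nonempty :=
        ⟨_, 1, rfl⟩
      obtain ⟨v, hv⟩ := Nat.sInf_mem hne
      rw [minDeg, ← hv]
      obtain ⟨w', hw'⟩ := exists_ne v
      exact aux_le_deg _ v w' hw'
    · -- δ ≤ λ
      apply le_csInf
      · -- some disconnecting set exists: all edges
        refine ⟨((enhancedPowerGraph G).edgeSet).ncard, (enhancedPowerGraph G).edgeSet,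
          le_refl _, ?_, rfl⟩
        intro hc
        obtain ⟨p⟩ := hc.preconnected 1 w
        cases p with
        | nil => exact hw rfl
        | cons h _ =>
          rw [SimpleGraph.deleteEdges_adj] at h
          exact h.2 ((SimpleGraph.mem_edgeSet _).mpr h.1)
      · rintro k ⟨S, hS, hc, rfl⟩
        exact aux_ge _ 1 hu S hS hc
end

section
/- For any finite group G, the independence number of the enhanced power graph of G equals the number of maximal cyclic subgroups of G. -/
lemma exists_maximalCyclic_mem {G : Type*} [Group G] [Fintype G] (x : G) :
    ∃ H : Subgroup G, IsMaximalCyclic H ∧ x ∈ H := by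
  classical
  set S : Set (Subgroup G) := {K | (∃ g : G, K = Subgroup.zpowers g) ∧ x ∈ K} with hS
  have hfin : S.Finite := Set.toFinite _
  have hne : S.Nonempty := ⟨Subgroup.zpowers x, ⟨x, rfl⟩, Subgroup.mem_zpowers x⟩
  obtain ⟨H, hHmem, hmax⟩ : ∃ H ∈ S, ∀ K ∈ S, id H ≤ id K → H = K := by
    obtain ⟨H, hH1, hH2⟩ := Set.Finite.exists_maximal hfin hne
    exact ⟨H, hH1, fun K hK h => le_antisymm h (hH2 hK h)⟩
  refine ⟨H, ⟨hHmem.1, ?_⟩, hHmem.2⟩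
  intro K hK hHK
  exact hmax K ⟨hK, hHK hHmem.2⟩ hHK

/-- For any finite group `G`, the independence number of the enhanced power
graph of `G` equals the number of maximal cyclic subgroups of `G`. -/
theorem stmt_2 {G : Type*} [Group G] [Fintype G] :
    indepNum (enhancedPowerGraph G) = {H : Subgroup G | IsMaximalCyclic H}.ncard := by
  classical
  set M : Set (Subgroup G) := {H | IsMaximalCyclic H} with hM
  have hMfin : M.Finite := Set.toFinite _
  -- choose a maximal cyclic subgroup containing each element
  have hchoice : ∀ x : G, ∃ H : Subgroup G, IsMaximalCyclic H ∧ x ∈ H :=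
    fun x => exists_maximalCyclic_mem x
  choose f hf1 hf2 using hchoice
  -- choose a generator of each maximal cyclic subgroup
  have hgen : ∀ H ∈ M, ∃ g : G, H = Subgroup.zpowers g := fun H hH => hH.1
  -- upper bound: any independent set has ncard ≤ M.ncard
  have hub : ∀ k ∈ {k | ∃ s : Set G, IsIndepSet' (enhancedPowerGraph G) s ∧ s.ncard = k},
      k ≤ M.ncard := by
    rintro k ⟨s, hs, rfl⟩
    apply Set.ncard_le_ncard_of_injOn f (fun x _ => by exact hf1 x) _ hMfin
    intro x hx y hy hxy
    by_contra hne
    have hadj : (enhancedPowerGraph G).Adj x y := by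
      refine ⟨hne, ?_⟩
      obtain ⟨g, hg⟩ := (hf1 x).1
      exact ⟨g, hg ▸ hf2 x, (hxy ▸ hg) ▸ hf2 y⟩
    exact hs hx hy hne hadj
  -- lower bound: generators of distinct maximal cyclic subgroups are independent
  have hlb : M.ncard ∈ {k | ∃ s : Set G, IsIndepSet' (enhancedPowerGraph G) s ∧ s.ncard = k} := by
    choose gen hgen' using hgen
    set g' : Subgroup G → G := fun H => if h : H ∈ M then gen H h else 1 with hg'
    have hgenspec : ∀ H ∈ M, H = Subgroup.zpowers (g' H) := by
      intro H hH; simp only [hg', dif_pos hH]; exact hgen' H hH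
    refine ⟨g' '' M, ?_, ?_⟩
    · rintro a ⟨H, hH, rfl⟩ b ⟨K, hK, rfl⟩ hne hadj
      obtain ⟨-, z, haz, hbz⟩ := hadj
      have h1 : H = Subgroup.zpowers z := by
        refine hH.2 _ ⟨z, rfl⟩ ?_
        rw [hgenspec H hH]
        exact (Subgroup.zpowers_le).mpr haz
      have h2 : K = Subgroup.zpowers z := by
        refine hK.2 _ ⟨z, rfl⟩ ?_
        rw [hgenspec K hK]
        exact (Subgroup.zpowers_le).mpr hbz
      exact hne (by rw [h1.trans h2.symm])
    · apply Set.ncard_image_of_injOn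
      intro H hH K hK hHK
      rw [hgenspec H hH, hgenspec K hK, hHK]
  refine le_antisymm (csSup_le ⟨0, ∅, ?_, by simp⟩ hub) (le_csSup ⟨M.ncard, hub⟩ hlb)
  intro x hx; simp at hx
end

section
/- For any finite group G, the vertex covering number of the enhanced power graph of G equals |G| − μ(G), where μ(G) is the number of maximal cyclic subgroups of G. -/
/-- Every cyclic subgroup of a finite group is contained in a maximal cyclic subgroup. -/
lemma exists_maximalCyclic_le {G : Type*} [Group G] [Fintype G] (z : G) :
    ∃ H : Subgroup G, IsMaximalCyclic H ∧ Subgroup.zpowers z ≤ H := by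
  obtain ⟨w, hw, hmax⟩ := Set.Finite.exists_maximalFor
    (fun w : G => Nat.card (Subgroup.zpowers w))
    {w : G | Subgroup.zpowers z ≤ Subgroup.zpowers w}
    (Set.toFinite _) ⟨z, show Subgroup.zpowers z ≤ Subgroup.zpowers z from le_rfl⟩
  refine ⟨Subgroup.zpowers w, ⟨⟨w, rfl⟩, ?_⟩, hw⟩
  rintro K ⟨u, rfl⟩ hle
  have hu : u ∈ {w : G | Subgroup.zpowers z ≤ Subgroup.zpowers w} :=
    le_trans hw hle
  have hcard : Nat.card (Subgroup.zpowers w) = Nat.card (Subgroup.zpowers u) :=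
    le_antisymm (Subgroup.card_le_of_le hle) (hmax hu (Subgroup.card_le_of_le hle))
  exact Subgroup.eq_of_le_of_card_ge hle hcard.ge

/-- For any finite group `G`, the vertex covering number of the enhanced
power graph of `G` equals `|G| − μ(G)`, where `μ(G)` is the number of maximal cyclic
subgroups of `G`. -/
theorem stmt_4 {G : Type*} [Group G] [Fintype G] :
    vertexCoverNum (enhancedPowerGraph G) =
      Fintype.card G - {H : Subgroup G | IsMaximalCyclic H}.ncard := by
  classical
  set M : Set (Subgroup G) := {H : Subgroup G | IsMaximalCyclic H} with hM
  -- choose a generator of each maximal cyclic subgroup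
  have hgen : ∀ H ∈ M, ∃ g : G, H = Subgroup.zpowers g := fun H hH => hH.1
  choose! gen hgenspec using hgen
  set S : Set G := gen '' M with hS
  have hgenInj : Set.InjOn gen M := by
    intro H hH K hK h
    rw [hgenspec H hH, h, ← hgenspec K hK]
  -- the complement of S is a vertex cover
  have hcover : IsVertexCover (enhancedPowerGraph G) Sᶜ := by
    intro x y hxy
    by_contra hc
    push_neg at hc
    obtain ⟨hx, hy⟩ := hc
    simp only [Set.notMem_compl_iff] at hx hy
    obtain ⟨H, hH, rfl⟩ := hx
    obtain ⟨K, hK, rfl⟩ := hy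
    obtain ⟨hne, z, hxz, hyz⟩ := hxy
    have hHz : H ≤ Subgroup.zpowers z := by
      rw [hgenspec H hH]; exact Subgroup.zpowers_le.mpr hxz
    have hKz : K ≤ Subgroup.zpowers z := by
      rw [hgenspec K hK]; exact Subgroup.zpowers_le.mpr hyz
    have h1 : H = Subgroup.zpowers z := hH.2 _ ⟨z, rfl⟩ hHz
    have h2 : K = Subgroup.zpowers z := hK.2 _ ⟨z, rfl⟩ hKz
    exact hne (by rw [h1.trans h2.symm])
  have hScard : S.ncard = M.ncard := Set.ncard_image_of_injOn hgenInj
  have hSccard : Sᶜ.ncard = Fintype.card G - M.ncard := by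
    have := Set.ncard_add_ncard_compl S
    rw [Nat.card_eq_fintype_card] at this
    omega
  -- every vertex cover has at least |G| - μ elements
  have hlow : ∀ s : Set G, IsVertexCover (enhancedPowerGraph G) s →
      Fintype.card G - M.ncard ≤ s.ncard := by
    intro s hs
    -- the complement of s is an independent set, inject it into M
    have hind : ∀ x ∈ sᶜ, ∀ y ∈ sᶜ, x ≠ y → ¬ (enhancedPowerGraph G).Adj x y := by
      intro x hx y hy _ hadj
      rcases hs hadj with h | h
      exacts [hx h, hy h]
    choose f hfM hfmem using fun x : G => exists_maximalCyclic_le x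
    have hfx : ∀ x : G, x ∈ f x := fun x => hfmem x (Subgroup.mem_zpowers x)
    have hinj : Set.InjOn f sᶜ := by
      intro x hx y hy hfxy
      by_contra hne
      apply hind x hx y hy hne
      obtain ⟨g, hg⟩ := (hfM x).1
      refine ⟨hne, g, ?_, ?_⟩
      · rw [← hg]; exact hfx x
      · rw [← hg, hfxy]; exact hfx y
    have h1 : sᶜ.ncard ≤ M.ncard := by
      calc sᶜ.ncard = (f '' sᶜ).ncard := (Set.ncard_image_of_injOn hinj).symm
        _ ≤ M.ncard := Set.ncard_le_ncard (by rintro _ ⟨x, _, rfl⟩; exact hfM x)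
          (Set.toFinite M)
    have h2 := Set.ncard_add_ncard_compl s
    rw [Nat.card_eq_fintype_card] at h2
    omega
  apply le_antisymm
  · exact Nat.sInf_le ⟨Sᶜ, hcover, hSccard⟩
  · refine le_csInf ⟨Sᶜ.ncard, Sᶜ, hcover, rfl⟩ ?_
    rintro k ⟨s, hsc, rfl⟩
    exact hlow s hsc
end

section
/- Let G be a finite group. If |G| is odd, then the matching number of the enhanced power graph of G equals (|G| − 1)/2. If |G| is even and t is the number of involutions in G, then (|G| − (t − 1))/2 ≤ α'(P_e(G)) ≤ |G|/2. -/
/-- The finset of vertices of an edge. -/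
noncomputable def vertFinset {V : Type*} [Fintype V] (e : Sym2 V) : Finset V :=
  (Set.toFinite {v | v ∈ e}).toFinset

lemma mem_vertFinset {V : Type*} [Fintype V] (e : Sym2 V) (v : V) :
    v ∈ vertFinset e ↔ v ∈ e := by
  simp [vertFinset]

lemma card_vertFinset {V : Type*} [Fintype V] (e : Sym2 V) (he : ¬ e.IsDiag) :
    (vertFinset e).card = 2 := by
  classical
  induction e with
  | _ a b =>
    have hab : a ≠ b := by simpa using he
    have h : vertFinset s(a, b) = {a, b} := by
      ext v; simp [mem_vertFinset]
    rw [h, Finset.card_pair hab]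

lemma two_mul_matching_le {V : Type*} [Fintype V] (g : SimpleGraph V)
    {M : Set (Sym2 V)} (hM : IsMatching' g M) : 2 * M.ncard ≤ Fintype.card V := by
  classical
  obtain ⟨hsub, hpair⟩ := hM
  have hfin : M.Finite := Set.toFinite M
  set F : Finset (Sym2 V) := hfin.toFinset with hFdef
  have hMcard : M.ncard = F.card := Set.ncard_eq_toFinset_card M hfin
  have hdisj : ∀ e ∈ F, ∀ f ∈ F, e ≠ f → Disjoint (vertFinset e) (vertFinset f) := by
    intro e he f hf hef
    rw [Finset.disjoint_left]
    intro v hv1 hv2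
    rw [mem_vertFinset] at hv1 hv2
    exact hpair (hfin.mem_toFinset.mp he) (hfin.mem_toFinset.mp hf) hef v hv1 hv2
  have hcards : ∀ e ∈ F, (vertFinset e).card = 2 := fun e he =>
    card_vertFinset e (g.not_isDiag_of_mem_edgeSet (hsub (hfin.mem_toFinset.mp he)))
  calc 2 * M.ncard = ∑ e ∈ F, (vertFinset e).card := by
        rw [hMcard, Finset.sum_congr rfl hcards, Finset.sum_const, smul_eq_mul, mul_comm]
      _ = (F.biUnion vertFinset).card := (Finset.card_biUnion hdisj).symm
      _ ≤ Fintype.card V := by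
        simpa using Finset.card_le_card (Finset.subset_univ (F.biUnion vertFinset))

/-- Let `G` be a finite group. If `|G|` is odd then the matching number of
the enhanced power graph of `G` is `(|G| − 1)/2`; if `|G|` is even and `t` is the number of
involutions of `G`, then `(|G| − (t − 1))/2 ≤ α'(P_e(G)) ≤ |G|/2`. -/
theorem stmt_5 {G : Type*} [Group G] [Fintype G] (t : ℕ)
    (ht : t = {x : G | orderOf x = 2}.ncard) :
    (Odd (Fintype.card G) →
      matchingNum (enhancedPowerGraph G) = (Fintype.card G - 1) / 2) ∧
    (Even (Fintype.card G) →
      (Fintype.card G - (t - 1)) / 2 ≤ matchingNum (enhancedPowerGraph G) ∧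
        matchingNum (enhancedPowerGraph G) ≤ Fintype.card G / 2) := by
  classical
  set n := Fintype.card G with hn
  set A : Set ℕ :=
    {k | ∃ M : Set (Sym2 G), IsMatching' (enhancedPowerGraph G) M ∧ M.ncard = k} with hA
  have hmnum : matchingNum (enhancedPowerGraph G) = sSup A := rfl
  have hA_ub : ∀ k ∈ A, 2 * k ≤ n := by
    rintro k ⟨M, hM, rfl⟩
    exact two_mul_matching_le _ hM
  have hbdd : BddAbove A := ⟨n, fun k hk => by have := hA_ub k hk; omega⟩
  have hA0 : (0 : ℕ) ∈ A :=
    ⟨∅, ⟨Set.empty_subset _, Set.pairwise_empty _⟩, Set.ncard_empty _⟩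
  -- the set of non-self-inverse elements and the matching of inverse pairs
  set Sfin : Finset G := Finset.univ.filter (fun x => x ≠ x⁻¹) with hSdef
  set MF : Finset (Sym2 G) := Sfin.image (fun x => s(x, x⁻¹)) with hMFdef
  have hmemS : ∀ x : G, x ∈ Sfin ↔ x ≠ x⁻¹ := by
    intro x; simp [hSdef]
  have hmemMF : ∀ e : Sym2 G, e ∈ MF ↔ ∃ x : G, x ≠ x⁻¹ ∧ s(x, x⁻¹) = e := by
    intro e
    simp only [hMFdef, Finset.mem_image]
    constructor
    · rintro ⟨x, hx, rfl⟩; exact ⟨x, (hmemS x).mp hx, rfl⟩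
    · rintro ⟨x, hx, rfl⟩; exact ⟨x, (hmemS x).mpr hx, rfl⟩
  -- counting : |Sfin| = 2 * |MF|
  have hScard : Sfin.card = 2 * MF.card := by
    rw [Finset.card_eq_sum_card_image (fun x => s(x, x⁻¹)) Sfin]
    rw [← hMFdef]
    have hfib : ∀ b ∈ MF, (Sfin.filter (fun a => s(a, a⁻¹) = b)).card = 2 := by
      intro b hb
      obtain ⟨x, hx, rfl⟩ := (hmemMF b).mp hb
      have hfil : Sfin.filter (fun a => s(a, a⁻¹) = s(x, x⁻¹)) = {x, x⁻¹} := by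
        ext y
        simp only [Finset.mem_filter, Finset.mem_insert, Finset.mem_singleton, hmemS,
          Sym2.eq_iff]
        constructor
        · rintro ⟨hy, (⟨h1, h2⟩ | ⟨h1, h2⟩)⟩
          · exact Or.inl h1
          · exact Or.inr h1
        · rintro (rfl | rfl)
          · exact ⟨hx, Or.inl ⟨rfl, rfl⟩⟩
          · exact ⟨by rw [inv_inv]; exact hx.symm, Or.inr ⟨rfl, inv_inv x⟩⟩
      rw [hfil, Finset.card_pair hx]
    rw [Finset.sum_congr rfl hfib, Finset.sum_const, smul_eq_mul, mul_comm]
  -- MF is a matching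
  have hMF_match : IsMatching' (enhancedPowerGraph G) (↑MF : Set (Sym2 G)) := by
    constructor
    · intro e he
      obtain ⟨x, hx, rfl⟩ := (hmemMF e).mp he
      rw [SimpleGraph.mem_edgeSet]
      exact ⟨hx, x, Subgroup.mem_zpowers x, Subgroup.inv_mem _ (Subgroup.mem_zpowers x)⟩
    · intro e he f hf hef v hve hvf
      obtain ⟨x, hx, rfl⟩ := (hmemMF e).mp he
      obtain ⟨y, hy, rfl⟩ := (hmemMF f).mp hf
      apply hef
      rw [Sym2.eq_iff]
      rw [Sym2.mem_iff] at hve hvf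
      rcases hve with rfl | rfl
      · rcases hvf with h | h
        · exact Or.inl ⟨h, by rw [h]⟩
        · exact Or.inr ⟨h, by rw [h, inv_inv]⟩
      · rcases hvf with h | h
        · exact Or.inr ⟨by rw [← h, inv_inv], h⟩
        · exact Or.inl ⟨inv_injective h, h⟩
  have hMFmem : MF.card ∈ A := ⟨(↑MF : Set (Sym2 G)), hMF_match, Set.ncard_coe_finset MF⟩
  -- the self-inverse elements
  set Tfin : Finset G := Finset.univ.filter (fun x => x = x⁻¹) with hTdef
  have hST : Tfin.card + Sfin.card = n := by
    rw [hn, ← Finset.card_univ, hTdef, hSdef]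
    exact Finset.card_filter_add_card_filter_not (fun x => x = x⁻¹)
  have hself : ∀ x : G, x = x⁻¹ ↔ orderOf x ∣ 2 := by
    intro x
    rw [orderOf_dvd_iff_pow_eq_one, pow_two, mul_eq_one_iff_eq_inv]
  constructor
  · -- odd case
    intro hodd
    have hT1 : Tfin = {1} := by
      ext x
      simp only [hTdef, Finset.mem_filter, Finset.mem_univ, true_and, Finset.mem_singleton]
      constructor
      · intro hx
        have h2 : orderOf x ∣ 2 := (hself x).mp hx
        have hcard : orderOf x ∣ n := hn ▸ orderOf_dvd_card
        rcases (Nat.dvd_prime Nat.prime_two).mp h2 with h1 | h1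
        · exact orderOf_eq_one_iff.mp h1
        · exfalso
          rw [h1] at hcard
          rcases hodd with ⟨m, hm⟩
          omega
      · rintro rfl
        simp
    have hScard' : Sfin.card = n - 1 := by
      have := hST; rw [hT1, Finset.card_singleton] at this; omega
    have hnpos : 0 < n := hn ▸ Fintype.card_pos
    have h2MF : 2 * MF.card = n - 1 := by omega
    have hub : ∀ k ∈ A, k ≤ (n - 1) / 2 := by
      intro k hk
      have := hA_ub k hk
      rcases hodd with ⟨m, hm⟩
      omega
    rw [hmnum]
    refine le_antisymm (csSup_le ⟨0, hA0⟩ hub) ?_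
    have : MF.card = (n - 1) / 2 := by
      rcases hodd with ⟨m, hm⟩; omega
    rw [← this]
    exact le_csSup hbdd hMFmem
  · -- even case
    intro heven
    have h2dvd : 2 ∣ n := heven.two_dvd
    haveI : Fact (Nat.Prime 2) := ⟨Nat.prime_two⟩
    obtain ⟨i, hi⟩ := exists_prime_orderOf_dvd_card (G := G) 2 (hn ▸ h2dvd)
    have ht1 : 1 ≤ t := by
      rw [ht]
      exact (Set.ncard_pos (Set.toFinite _)).mpr ⟨i, hi⟩
    have hTcard : Tfin.card = 1 + t := by
      have hTeq : Tfin = insert 1 (Finset.univ.filter (fun x => orderOf x = 2)) := by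
        ext x
        simp only [hTdef, Finset.mem_filter, Finset.mem_univ, true_and, Finset.mem_insert]
        rw [hself]
        constructor
        · intro h2
          rcases (Nat.dvd_prime Nat.prime_two).mp h2 with h1 | h1
          · exact Or.inl (orderOf_eq_one_iff.mp h1)
          · exact Or.inr h1
        · rintro (rfl | h1)
          · simp
          · rw [h1]
        
      have h1not : (1 : G) ∉ Finset.univ.filter (fun x => orderOf x = 2) := by
        simp
      have htcard : t = (Finset.univ.filter (fun x : G => orderOf x = 2)).card := by
        rw [ht, show {x : G | orderOf x = 2}
            = ↑(Finset.univ.filter (fun x : G => orderOf x = 2)) by ext x; simp,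
          Set.ncard_coe_finset]
      rw [hTeq, Finset.card_insert_of_notMem h1not, ← htcard]
      omega
    have hnt : 1 + t ≤ n := by
      rw [← hTcard, ← hST]; omega
    have hScard' : Sfin.card = n - (1 + t) := by omega
    have h2MF : 2 * MF.card = n - (1 + t) := by omega
    -- build the bigger matching with the edge s(1, i)
    have hi_inv : i = i⁻¹ := (hself i).mpr (by simp [hi])
    have hi_ne : (1 : G) ≠ i := by
      intro h
      rw [← h] at hi
      simp at hi
    have hnotmem : s(1, i) ∉ (↑MF : Set (Sym2 G)) := by
      intro h
      obtain ⟨x, hx, hxe⟩ := (hmemMF _).mp h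
      rw [Sym2.eq_iff] at hxe
      rcases hxe with ⟨h1, h2⟩ | ⟨h1, h2⟩
      · rw [h1] at hx; simp at hx
      · rw [inv_eq_one.mp h2] at hx; simp at hx
    set M' : Set (Sym2 G) := insert s(1, i) (↑MF : Set (Sym2 G)) with hM'def
    have hM'card : M'.ncard = MF.card + 1 := by
      rw [hM'def, Set.ncard_insert_of_notMem hnotmem (Set.toFinite _),
        Set.ncard_coe_finset]
    have hsymmr : Symmetric (fun e f : Sym2 G => ∀ v : G, v ∈ e → v ∉ f) :=
      fun e f h v hvf hve => h v hve hvf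
    have hM'match : IsMatching' (enhancedPowerGraph G) M' := by
      constructor
      · rw [hM'def, Set.insert_subset_iff]
        refine ⟨?_, hMF_match.1⟩
        rw [SimpleGraph.mem_edgeSet]
        exact ⟨hi_ne, i, Subgroup.one_mem _, Subgroup.mem_zpowers i⟩
      · haveI : Std.Symm (fun e f : Sym2 G => ∀ v : G, v ∈ e → v ∉ f) := ⟨fun a b h => hsymmr h⟩
        rw [hM'def, Set.pairwise_insert_of_symmetric]
        refine ⟨hMF_match.2, ?_⟩
        intro f hf hne v hv1 hvf
        obtain ⟨x, hx, rfl⟩ := (hmemMF f).mp hf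
        rw [Sym2.mem_iff] at hv1 hvf
        rcases hv1 with rfl | hv0
        · rcases hvf with h | h
          · rw [← h] at hx; simp at hx
          · have hx1 : x = 1 := inv_eq_one.mp h.symm
            rw [hx1] at hx; simp at hx
        · rcases hvf with h | h
          · have hxi : x = i := h.symm.trans hv0
            apply hx; rw [hxi]; exact hi_inv
          · have h2 : x⁻¹ = i := h.symm.trans hv0
            have hxi : x = i := by rw [← inv_inv x, h2, ← hi_inv]
            apply hx; rw [hxi]; exact hi_inv
    have hM'mem : MF.card + 1 ∈ A := ⟨M', hM'match, hM'card⟩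
    constructor
    · rw [hmnum]
      have hle : (n - (t - 1)) / 2 ≤ MF.card + 1 := by omega
      exact le_trans hle (le_csSup hbdd hM'mem)
    · rw [hmnum]
      refine csSup_le ⟨0, hA0⟩ ?_
      intro k hk
      have := hA_ub k hk
      omega
end

section
/- Let p be a prime and G a finite p-group. If p > 2, then the matching number of the enhanced power graph of G equals (|G| − 1)/2. If p = 2, then the matching number equals (|G| − (t − 1))/2, where t is the number of involutions in G. -/
set_option linter.unusedSectionVars false

def msupp {V : Type*} (M : Set (Sym2 V)) : Set V := {v | ∃ e ∈ M, v ∈ e}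

lemma msupp_card {V : Type*} [Fintype V] {g : SimpleGraph V} (M : Set (Sym2 V))
    (hM : IsMatching' g M) : (msupp M).ncard = 2 * M.ncard := by
  obtain ⟨hsub, hdisj⟩ := hM
  have hd : ∀ e ∈ M, ¬ e.IsDiag := fun e he => g.not_isDiag_of_mem_edgeSet (hsub he)
  clear hsub
  have hfin : M.Finite := Set.toFinite M
  revert hd hdisj
  refine Set.Finite.induction_on M hfin ?_ ?_
  · intro _ _; simp [msupp]
  · intro e M' henew hfin' ih hdisj hd
    obtain ⟨⟨a, b⟩, rfl⟩ := e.exists_rep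
    have hab : a ≠ b := by
      have := hd _ (Set.mem_insert _ _)
      simpa [Sym2.mk_isDiag_iff] using this
    have hset : msupp (insert s(a,b) M') = {a, b} ∪ msupp M' := by
      ext v
      simp only [msupp, Set.mem_setOf_eq, Set.mem_insert_iff, Set.mem_union]
      constructor
      · rintro ⟨e, (rfl | he), hv⟩
        · left; simpa [Sym2.mem_iff] using hv
        · exact Or.inr ⟨e, he, hv⟩
      · rintro (hv | ⟨e, he, hv⟩)
        · exact ⟨s(a,b), Or.inl rfl, by simpa [Sym2.mem_iff] using hv⟩
        · exact ⟨e, Or.inr he, hv⟩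
    have hdisj2 : Disjoint ({a, b} : Set V) (msupp M') := by
      rw [Set.disjoint_left]
      rintro v hv ⟨f, hf, hvf⟩
      have hne : s(a,b) ≠ f := by rintro rfl; exact henew hf
      have := hdisj (Set.mem_insert _ _) (Set.mem_insert_of_mem _ hf) hne v ?_ 
      · exact this hvf
      · simpa [Sym2.mem_iff] using hv
    rw [hset, Set.ncard_union_eq hdisj2 (Set.toFinite _) (Set.toFinite _),
      Set.ncard_pair hab, Set.ncard_insert_of_notMem henew (Set.toFinite _),
      ih (hdisj.mono (Set.subset_insert _ _))
        (fun e he => hd e (Set.mem_insert_of_mem _ he))]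
    ring

lemma pairs_matching {G : Type*} [Group G] [Fintype G] (A : Set G)
    (hinv : ∀ x ∈ A, x⁻¹ ∈ A) (hni : ∀ x ∈ A, x ≠ x⁻¹) :
    ∃ M : Set (Sym2 G), IsMatching' (enhancedPowerGraph G) M ∧ msupp M = A ∧
      2 * M.ncard = A.ncard := by
  set M : Set (Sym2 G) := {e | ∃ x ∈ A, e = s(x, x⁻¹)} with hMdef
  have hmem : ∀ {x v : G}, v ∈ (s(x, x⁻¹) : Sym2 G) ↔ v = x ∨ v = x⁻¹ := fun {x v} =>
    Sym2.mem_iff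
  have heq : ∀ {x y : G}, (x = y ∨ x = y⁻¹) → (s(x, x⁻¹) : Sym2 G) = s(y, y⁻¹) := by
    rintro x y (rfl | rfl)
    · rfl
    · rw [inv_inv, Sym2.eq_swap]
  have hM : IsMatching' (enhancedPowerGraph G) M := by
    constructor
    · rintro e ⟨x, hx, rfl⟩
      rw [SimpleGraph.mem_edgeSet]
      exact ⟨hni x hx, x, Subgroup.mem_zpowers x, Subgroup.inv_mem _ (Subgroup.mem_zpowers x)⟩
    · rintro e ⟨x, hx, rfl⟩ f ⟨y, hy, rfl⟩ hne v hve hvf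
      rcases hmem.mp hve with rfl | rfl
      · rcases hmem.mp hvf with h | h
        · exact hne (heq (Or.inl h))
        · exact hne (heq (Or.inr h))
      · rcases hmem.mp hvf with h | h
        · exact hne (heq (Or.inr (by rw [← h, inv_inv])))
        · exact hne (heq (Or.inl (inv_injective h)))
  have hsupp : msupp M = A := by
    ext v
    constructor
    · rintro ⟨e, ⟨x, hx, rfl⟩, hv⟩
      rcases hmem.mp hv with rfl | rfl
      · exact hx
      · exact hinv x hx
    · intro hv
      exact ⟨s(v, v⁻¹), ⟨v, hv, rfl⟩, Sym2.mem_mk_left _ _⟩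
  exact ⟨M, hM, hsupp, by rw [← hsupp, msupp_card M hM]⟩

section TwoGroup
variable {G : Type*} [Group G] [Fintype G]

lemma orderOf_invol (hG : IsPGroup 2 G) {x : G} (hx : x ≠ 1) :
    orderOf (x ^ (orderOf x / 2)) = 2 := by
  haveI : Fact (Nat.Prime 2) := ⟨Nat.prime_two⟩
  obtain ⟨k, hk⟩ := (IsPGroup.iff_orderOf.mp hG) x
  obtain ⟨k, rfl⟩ : ∃ k', k = k' + 1 := by
    have hk0 : k ≠ 0 := by
      rintro rfl
      rw [pow_zero] at hk
      exact hx (orderOf_eq_one_iff.mp hk)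
    exact ⟨k - 1, by omega⟩
  have hdiv : orderOf x / 2 = 2 ^ k := by
    rw [hk, pow_succ, Nat.mul_div_cancel _ two_pos]
  rw [hdiv, orderOf_pow, hk, Nat.gcd_eq_right (pow_dvd_pow 2 (Nat.le_succ k)),
    pow_succ, Nat.mul_div_cancel_left _ (pow_pos two_pos k)]

lemma eq_invol (hG : IsPGroup 2 G) {z a : G} (ha : a ∈ Subgroup.zpowers z)
    (h2 : orderOf a = 2) : a = z ^ (orderOf z / 2) := by
  haveI : Fact (Nat.Prime 2) := ⟨Nat.prime_two⟩
  have hane : a ≠ 1 := by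
    intro h; rw [h, orderOf_one] at h2; omega
  obtain ⟨m, hm⟩ := (IsPGroup.iff_orderOf.mp hG) z
  obtain ⟨k, hk⟩ := Subgroup.mem_zpowers_iff.mp ha
  obtain ⟨m, rfl⟩ : ∃ m', m = m' + 1 := by
    have hm0 : m ≠ 0 := by
      rintro rfl
      rw [pow_zero] at hm
      have hz1 : z = 1 := orderOf_eq_one_iff.mp hm
      rw [hz1] at hk
      exact hane (by rw [← hk, one_zpow])
    exact ⟨m - 1, by omega⟩
  have ha2 : a ^ (2 : ℕ) = 1 := by rw [← h2]; exact pow_orderOf_eq_one a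
  have h2k : z ^ (k * 2) = (1 : G) := by
    rw [zpow_mul, hk, show ((2:ℤ)) = ((2:ℕ):ℤ) from rfl, zpow_natCast, ha2]
  have hdvd : ((orderOf z : ℤ)) ∣ k * 2 := orderOf_dvd_iff_zpow_eq_one.mpr h2k
  rw [hm] at hdvd
  obtain ⟨c, hc⟩ := hdvd
  have hk' : k = (2:ℤ) ^ m * c := by
    have h2' : k * 2 = ((2:ℤ) ^ m * c) * 2 := by
      rw [hc]; push_cast; ring
    exact mul_right_cancel₀ two_ne_zero h2'
  set u : G := z ^ (2 ^ m : ℕ) with hu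
  have hau : a = u ^ c := by
    rw [← hk, hk', zpow_mul, hu, ← zpow_natCast z (2 ^ m : ℕ)]
    norm_cast
  have hu2 : u ^ (2 : ℕ) = 1 := by
    rw [hu, ← pow_mul, ← pow_succ, ← hm, pow_orderOf_eq_one]
  have hu2' : u ^ (2 : ℤ) = 1 := by
    rw [show ((2:ℤ)) = ((2:ℕ):ℤ) from rfl, zpow_natCast, hu2]
  have hgoal : orderOf z / 2 = 2 ^ m := by
    rw [hm, pow_succ, Nat.mul_div_cancel _ two_pos]
  rw [hgoal]
  rcases Int.even_or_odd c with ⟨q, rfl⟩ | ⟨q, rfl⟩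
  · exfalso
    apply hane
    rw [hau, show q + q = 2 * q by ring, zpow_mul, hu2', one_zpow]
  · rw [hau, zpow_add, zpow_mul, hu2', one_zpow, one_mul, zpow_one, hu]

lemma invol_eq (hG : IsPGroup 2 G) {z x y : G} (hx : x ∈ Subgroup.zpowers z)
    (hy : y ∈ Subgroup.zpowers z) (hx1 : x ≠ 1) (hy1 : y ≠ 1) :
    x ^ (orderOf x / 2) = y ^ (orderOf y / 2) := by
  have h1 : x ^ (orderOf x / 2) = z ^ (orderOf z / 2) :=
    eq_invol hG (Subgroup.pow_mem _ hx _) (orderOf_invol hG hx1)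
  have h2 : y ^ (orderOf y / 2) = z ^ (orderOf z / 2) :=
    eq_invol hG (Subgroup.pow_mem _ hy _) (orderOf_invol hG hy1)
  rw [h1, h2]

end TwoGroup

section Main
variable {G : Type*} [Group G] [Fintype G]

lemma orderOf_eq_two_of (x : G) (hx : x ≠ 1) (h : x = x⁻¹) : orderOf x = 2 := by
  have h2 : x ^ 2 = 1 := by
    have hxx : x * x = x * x⁻¹ := congrArg (x * ·) h
    rw [pow_two, hxx, mul_inv_cancel]
  rcases (Nat.dvd_prime Nat.prime_two).mp (orderOf_dvd_of_pow_eq_one h2) with h1 | h1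
  · exact absurd (orderOf_eq_one_iff.mp h1) hx
  · exact h1

lemma ub_noone (hG : IsPGroup 2 G) (M : Set (Sym2 G))
    (hM : IsMatching' (enhancedPowerGraph G) M) (h1 : ∀ e ∈ M, (1:G) ∉ e) :
    2 * M.ncard + {x : G | orderOf x = 2}.ncard + 1 ≤ Fintype.card G := by
  classical
  set ι : G → G := fun x => x ^ (orderOf x / 2) with hι
  set S := msupp M with hSdef
  have hSne : ∀ x ∈ S, x ≠ 1 := by
    rintro x ⟨e, he, hv⟩ rfl
    exact h1 e he hv
  have hkey : ∀ e ∈ M, ∀ x ∈ e, ∀ y ∈ e, ι x = ι y := by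
    intro e heM
    have hedge := hM.1 heM
    obtain ⟨⟨a, b⟩, rfl⟩ := e.exists_rep
    obtain ⟨-, z, haz, hbz⟩ := (SimpleGraph.mem_edgeSet _).mp hedge
    have ha1 : a ≠ 1 := by rintro rfl; exact h1 _ heM (Sym2.mem_mk_left _ _)
    have hb1 : b ≠ 1 := by rintro rfl; exact h1 _ heM (Sym2.mem_mk_right _ _)
    have hab : ι a = ι b := invol_eq hG haz hbz ha1 hb1
    intro x hx y hy
    rcases Sym2.mem_iff.mp hx with rfl | rfl <;> rcases Sym2.mem_iff.mp hy with rfl | rfl <;>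
      simp [hab]
  let D : Finset G := Finset.univ.erase 1
  let FI : Finset G := Finset.univ.filter (fun x => orderOf x = 2)
  let FS : Finset G := Finset.univ.filter (fun x => x ∈ S)
  have hFIcard : FI.card = {x : G | orderOf x = 2}.ncard := by
    rw [← Set.ncard_coe_finset]; congr 1; ext x; simp [FI]
  have hFScard : FS.card = S.ncard := by
    rw [← Set.ncard_coe_finset]; congr 1; ext x; simp [FS]
  have hSsub : FS ⊆ D := by
    intro x hx
    simp only [FS, Finset.mem_filter] at hx
    exact Finset.mem_erase.mpr ⟨hSne x hx.2, Finset.mem_univ x⟩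
  have hmapD : ∀ x ∈ D, ι x ∈ FI := by
    intro x hx
    simp only [D, Finset.mem_erase] at hx
    simp only [FI, Finset.mem_filter]
    exact ⟨Finset.mem_univ _, orderOf_invol hG hx.1⟩
  have hmapS : ∀ x ∈ FS, ι x ∈ FI := fun x hx => hmapD x (hSsub hx)
  have hsumD := Finset.card_eq_sum_card_fiberwise hmapD
  have hsumS := Finset.card_eq_sum_card_fiberwise hmapS
  have hper : ∀ u ∈ FI, (FS.filter (fun x => ι x = u)).card + 1 ≤
      (D.filter (fun x => ι x = u)).card := by
    intro u hu
    have h2order : orderOf u = 2 := by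
      simpa [FI] using hu
    have hu1 : u ≠ 1 := by
      intro h; rw [h, orderOf_one] at h2order; omega
    have huinv : u⁻¹ = u := by
      have : u * u = 1 := by rw [← pow_two, ← h2order]; exact pow_orderOf_eq_one u
      exact inv_eq_of_mul_eq_one_right this |>.symm ▸ (inv_eq_of_mul_eq_one_right this)
    have hιu : ι u = u := by
      simp only [hι, h2order]; norm_num
    -- even part
    set Mu : Set (Sym2 G) := {e ∈ M | ∀ v ∈ e, ι v = u} with hMudef
    have hMuM : Mu ⊆ M := Set.sep_subset _ _
    have hMu : IsMatching' (enhancedPowerGraph G) Mu :=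
      ⟨hMuM.trans hM.1, hM.2.mono hMuM⟩
    have hsupMu : msupp Mu = {x | x ∈ S ∧ ι x = u} := by
      ext v
      constructor
      · rintro ⟨e, ⟨heM, hall⟩, hv⟩
        exact ⟨⟨e, heM, hv⟩, hall v hv⟩
      · rintro ⟨⟨e, heM, hv⟩, hiv⟩
        exact ⟨e, ⟨heM, fun w hw => (hkey e heM w hw v hv).trans hiv⟩, hv⟩
    have hevenset : ((FS.filter (fun x => ι x = u)) : Set G) = msupp Mu := by
      rw [hsupMu]; ext x; simp [FS]
    have heven : (FS.filter (fun x => ι x = u)).card = 2 * Mu.ncard := by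
      rw [← Set.ncard_coe_finset, hevenset, msupp_card Mu hMu]
    -- odd part
    set C : Set G := {x | x ≠ 1 ∧ ι x = u} with hCdef
    have hoddset : ((D.filter (fun x => ι x = u)) : Set G) = C := by
      ext x; simp [D, C, and_comm]
    have huC : u ∈ C := ⟨hu1, hιu⟩
    have hinvA : ∀ x ∈ C \ {u}, x⁻¹ ∈ C \ {u} := by
      rintro x ⟨⟨hx1, hxu⟩, hxne⟩
      simp only [Set.mem_singleton_iff] at hxne
      have hx1' : x⁻¹ ≠ 1 := by simpa using hx1
      refine ⟨⟨hx1', ?_⟩, ?_⟩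
      · have := invol_eq hG (Subgroup.inv_mem _ (Subgroup.mem_zpowers x))
          (Subgroup.mem_zpowers x) hx1' hx1
        rw [← hxu]; exact this
      · simp only [Set.mem_singleton_iff]
        intro h
        apply hxne
        rw [← inv_inv x, h, huinv]
    have hniA : ∀ x ∈ C \ {u}, x ≠ x⁻¹ := by
      rintro x ⟨⟨hx1, hxu⟩, hxne⟩ hinv
      simp only [Set.mem_singleton_iff] at hxne
      apply hxne
      have h2x : orderOf x = 2 := orderOf_eq_two_of x hx1 hinv
      rw [← hxu]
      simp only [hι, h2x]
      norm_num
    obtain ⟨M₂, hM₂, hsup₂, hcard₂⟩ := pairs_matching (C \ {u}) hinvA hniA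
    have hodd : (D.filter (fun x => ι x = u)).card = 2 * M₂.ncard + 1 := by
      rw [← Set.ncard_coe_finset, hoddset, ← Set.ncard_diff_singleton_add_one huC,
        ← hsup₂, msupp_card M₂ hM₂]
    have hle : (FS.filter (fun x => ι x = u)).card ≤ (D.filter (fun x => ι x = u)).card :=
      Finset.card_le_card (Finset.filter_subset_filter _ hSsub)
    omega
  -- sum up
  have hsum : FS.card + FI.card ≤ D.card := by
    rw [hsumS, hsumD]
    calc (∑ u ∈ FI, (FS.filter (fun x => ι x = u)).card) + FI.card
        = ∑ u ∈ FI, ((FS.filter (fun x => ι x = u)).card + 1) := by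
          rw [Finset.sum_add_distrib, Finset.sum_const, smul_eq_mul, mul_one]
      _ ≤ ∑ u ∈ FI, (D.filter (fun x => ι x = u)).card := Finset.sum_le_sum hper
  have hDcard : D.card = Fintype.card G - 1 := by
    rw [Finset.card_erase_of_mem (Finset.mem_univ _), Finset.card_univ]
  have hScard : S.ncard = 2 * M.ncard := msupp_card M hM
  have hpos : 1 ≤ Fintype.card G := Fintype.card_pos
  omega

end Main

/-- Let `p` be a prime and `G` a finite `p`-group. If `p > 2` the matching
number of the enhanced power graph of `G` is `(|G| − 1)/2`; if `p = 2` it is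
`(|G| − (t − 1))/2`, where `t` is the number of involutions of `G`. -/
theorem stmt_9 {G : Type*} [Group G] [Fintype G] {p : ℕ} (hp : p.Prime)
    (hG : IsPGroup p G) (t : ℕ) (ht : t = {x : G | orderOf x = 2}.ncard) :
    (2 < p → matchingNum (enhancedPowerGraph G) = (Fintype.card G - 1) / 2) ∧
    (p = 2 → matchingNum (enhancedPowerGraph G) = (Fintype.card G - (t - 1)) / 2) := by
  classical
  haveI : Fact p.Prime := ⟨hp⟩
  obtain ⟨n, hn⟩ := IsPGroup.iff_card.mp hG
  rw [Nat.card_eq_fintype_card] at hn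
  -- general upper bound : twice the matching number is at most |G|
  have hub2 : ∀ M : Set (Sym2 G), IsMatching' (enhancedPowerGraph G) M →
      2 * M.ncard ≤ Fintype.card G := by
    intro M hM
    rw [← msupp_card M hM]
    calc (msupp M).ncard ≤ (Set.univ : Set G).ncard :=
          Set.ncard_le_ncard (Set.subset_univ _) (Set.toFinite _)
      _ = Fintype.card G := by rw [Set.ncard_univ, Nat.card_eq_fintype_card]
  constructor
  · -- odd case
    intro hp2
    have hodd : Odd (Fintype.card G) := by
      rw [hn]
      exact (hp.odd_of_ne_two (by omega)).pow
    have hni : ∀ x ∈ {x : G | x ≠ 1}, x ≠ x⁻¹ := by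
      intro x hx hinv
      have h2 : orderOf x = 2 := orderOf_eq_two_of x hx hinv
      have hdvd : 2 ∣ Fintype.card G := h2 ▸ orderOf_dvd_card
      rw [hn] at hdvd
      have : (2 : ℕ) ∣ p := Nat.Prime.dvd_of_dvd_pow Nat.prime_two hdvd
      have := (Nat.prime_dvd_prime_iff_eq Nat.prime_two hp).mp this
      omega
    have hinv : ∀ x ∈ {x : G | x ≠ 1}, x⁻¹ ∈ {x : G | x ≠ 1} := by
      intro x hx
      simpa using hx
    obtain ⟨M, hM, hsupp, hcard⟩ := pairs_matching {x : G | x ≠ 1} hinv hni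
    have hA : ({x : G | x ≠ 1}).ncard = Fintype.card G - 1 := by
      have : {x : G | x ≠ 1} = Set.univ \ {1} := by ext x; simp
      rw [this, Set.ncard_diff (Set.subset_univ _), Set.ncard_univ,
        Nat.card_eq_fintype_card, Set.ncard_singleton]
    unfold matchingNum
    apply IsGreatest.csSup_eq
    constructor
    · exact ⟨M, hM, by omega⟩
    · rintro k ⟨M', hM', rfl⟩
      have := hub2 M' hM'
      obtain ⟨j, hj⟩ := hodd
      omega
  · -- p = 2 case
    rintro rfl
    have hone_le : 1 ≤ Fintype.card G := Fintype.card_pos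
    by_cases hc : Fintype.card G = 1
    · -- trivial group
      have hallone : ∀ x : G, x = 1 := by
        intro x
        haveI := Fintype.card_le_one_iff.mp (le_of_eq hc)
        exact this x 1
      have hI : {x : G | orderOf x = 2} = ∅ := by
        ext x
        simp only [Set.mem_setOf_eq, Set.mem_empty_iff_false, iff_false]
        rw [hallone x, orderOf_one]
        omega
      have ht0 : t = 0 := by rw [ht, hI, Set.ncard_empty]
      unfold matchingNum
      apply IsGreatest.csSup_eq
      constructor
      · exact ⟨∅, ⟨Set.empty_subset _, Set.pairwise_empty _⟩, by simp [ht0, hc]⟩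
      · rintro k ⟨M', hM', rfl⟩
        have := hub2 M' hM'
        omega
    · -- nontrivial 2-group
      have hdvd : 2 ∣ Fintype.card G := by
        rcases Nat.eq_zero_or_pos n with rfl | hn1
        · rw [pow_zero] at hn; omega
        · rw [hn]; exact dvd_pow_self 2 (by omega)
      obtain ⟨u₀, hu₀⟩ := exists_prime_orderOf_dvd_card 2 hdvd
      have hu01 : u₀ ≠ 1 := by
        intro h; rw [h, orderOf_one] at hu₀; omega
      have htpos : 1 ≤ t := by
        rw [ht]
        exact (Set.ncard_pos (Set.toFinite _)).mpr ⟨u₀, hu₀⟩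
      have htle : t + 1 ≤ Fintype.card G := by
        have hsub : insert (1:G) {x : G | orderOf x = 2} ⊆ Set.univ := Set.subset_univ _
        have h1I : (1:G) ∉ {x : G | orderOf x = 2} := by
          simp only [Set.mem_setOf_eq, orderOf_one]; omega
        have := Set.ncard_le_ncard hsub (Set.toFinite _)
        rw [Set.ncard_insert_of_notMem h1I (Set.toFinite _), Set.ncard_univ,
          Nat.card_eq_fintype_card] at this
        omega
      -- lower bound construction
      set A : Set G := {x : G | x ≠ 1 ∧ orderOf x ≠ 2} with hAdef
      have hinvA : ∀ x ∈ A, x⁻¹ ∈ A := by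
        rintro x ⟨hx1, hx2⟩
        refine ⟨by simpa using hx1, ?_⟩
        rw [orderOf_inv]
        exact hx2
      have hniA : ∀ x ∈ A, x ≠ x⁻¹ := by
        rintro x ⟨hx1, hx2⟩ hinv
        exact hx2 (orderOf_eq_two_of x hx1 hinv)
      obtain ⟨Mp, hMp, hsuppp, hcardp⟩ := pairs_matching A hinvA hniA
      have hAcard : A.ncard = Fintype.card G - 1 - t := by
        have hAeq : A = Set.univ \ insert (1:G) {x : G | orderOf x = 2} := by
          ext x
          simp only [hAdef, Set.mem_setOf_eq, Set.mem_diff, Set.mem_univ, true_and,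
            Set.mem_insert_iff, not_or]
        have h1I : (1:G) ∉ {x : G | orderOf x = 2} := by
          simp only [Set.mem_setOf_eq, orderOf_one]; omega
        rw [hAeq, Set.ncard_diff (Set.subset_univ _), Set.ncard_univ,
          Nat.card_eq_fintype_card, Set.ncard_insert_of_notMem h1I (Set.toFinite _), ← ht]
        omega
      set Mstar : Set (Sym2 G) := insert s(1, u₀) Mp with hMs
      have hnotmem : s(1, u₀) ∉ Mp := by
        intro h
        have : (1:G) ∈ msupp Mp := ⟨_, h, Sym2.mem_mk_left _ _⟩
        rw [hsuppp] at this
        exact this.1 rfl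
      have hsym : Symmetric fun (e f : Sym2 G) => ∀ v : G, v ∈ e → v ∉ f :=
        fun e f h v hvf hve => h v hve hvf
      have hMstar : IsMatching' (enhancedPowerGraph G) Mstar := by
        constructor
        · rintro e (rfl | he)
          · rw [SimpleGraph.mem_edgeSet]
            exact ⟨Ne.symm hu01, u₀, Subgroup.one_mem _, Subgroup.mem_zpowers _⟩
          · exact hMp.1 he
        · rw [@Set.pairwise_insert_of_symm _ _ _ _ ⟨fun a b h => hsym h⟩]
          refine ⟨hMp.2, ?_⟩
          intro f hf _ v hv hvf
          have hvA : v ∈ A := by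
            rw [← hsuppp]; exact ⟨f, hf, hvf⟩
          rcases Sym2.mem_iff.mp hv with rfl | rfl
          · exact hvA.1 rfl
          · exact hvA.2 hu₀
      have hcardstar : Mstar.ncard = Mp.ncard + 1 :=
        Set.ncard_insert_of_notMem hnotmem (Set.toFinite _)
      unfold matchingNum
      apply IsGreatest.csSup_eq
      constructor
      · exact ⟨Mstar, hMstar, by omega⟩
      · rintro k ⟨M, hM, rfl⟩
        by_cases hone : ∃ e ∈ M, (1:G) ∈ e
        · obtain ⟨e₀, he₀, h1e⟩ := hone
          have hM' : IsMatching' (enhancedPowerGraph G) (M \ {e₀}) :=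
            ⟨Set.diff_subset.trans hM.1, hM.2.mono Set.diff_subset⟩
          have hno : ∀ e ∈ M \ {e₀}, (1:G) ∉ e := by
            rintro f ⟨hfM, hfne⟩ h1f
            exact hM.2 he₀ hfM (fun h => hfne h.symm) 1 h1e h1f
          have hub := ub_noone hG (M \ {e₀}) hM' hno
          rw [← ht] at hub
          have hdd : (M \ {e₀}).ncard + 1 = M.ncard :=
            Set.ncard_diff_singleton_add_one he₀ (Set.toFinite _)
          omega
        · push_neg at hone
          have hub := ub_noone hG M hM hone
          rw [← ht] at hub
          omega
end

section
/- Let p be a prime and G a finite abelian p-group with exponent p^α. If G is non-cyclic, then the strong metric dimension of the enhanced power graph of G equals |G| − (α + 1); if G is cyclic, it equals |G| − 1. -/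
/-! ### Auxiliary material for Statement 10 -/

set_option linter.unusedSectionVars false

section Stmt10Aux

open Subgroup

/-- Closed neighborhood in the enhanced power graph, as a set. -/
def Nbr {G : Type*} [Group G] (x : G) : Set G := {w | w ∈ zpowers x ∨ x ∈ zpowers w}

variable {G : Type*} [CommGroup G] [Fintype G] {p : ℕ}

omit [Fintype G] in
lemma mem_Nbr_self (x : G) : x ∈ Nbr x := Or.inl (mem_zpowers x)

omit [Fintype G] in
lemma Nbr_comm {x y : G} : y ∈ Nbr x ↔ x ∈ Nbr y := or_comm

omit [Fintype G] in
lemma Nbr_eq_of_zpowers_eq {x y : G} (h : zpowers x = zpowers y) : Nbr x = Nbr y := by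
  ext w
  have h1 : x ∈ zpowers w ↔ y ∈ zpowers w := by
    rw [← zpowers_le, ← zpowers_le, h]
  simp only [Nbr, Set.mem_setOf_eq, h, h1]

lemma mem_zpowers_pow_of_gcd_dvd {z : G} {a b : ℕ} (h : (orderOf z).gcd b ∣ a) :
    z ^ a ∈ zpowers (z ^ b) := by
  obtain ⟨c, rfl⟩ := h
  have key : z ^ ((orderOf z).gcd b) ∈ zpowers (z ^ b) := by
    refine mem_zpowers_iff.2 ⟨Nat.gcdB (orderOf z) b, ?_⟩
    have hz : (z : G) ^ (((orderOf z).gcd b : ℤ)) = (z ^ b) ^ (Nat.gcdB (orderOf z) b) := by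
      rw [Nat.gcd_eq_gcd_ab, zpow_add, zpow_mul, zpow_mul]
      simp [zpow_natCast, pow_orderOf_eq_one]
    rw [← hz, zpow_natCast]
  rw [pow_mul]
  exact pow_mem key c

lemma zpowers_comparable (hp : p.Prime) (z : G) (hz : ∃ k, orderOf z = p ^ k) (a b : ℕ) :
    z ^ a ∈ zpowers (z ^ b) ∨ z ^ b ∈ zpowers (z ^ a) := by
  obtain ⟨k, hk⟩ := hz
  have hda : (orderOf z).gcd a ∣ p ^ k := hk ▸ Nat.gcd_dvd_left _ _
  have hdb : (orderOf z).gcd b ∣ p ^ k := hk ▸ Nat.gcd_dvd_left _ _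
  obtain ⟨i, hi, hia⟩ := (Nat.dvd_prime_pow hp).1 hda
  obtain ⟨j, hj, hjb⟩ := (Nat.dvd_prime_pow hp).1 hdb
  rcases le_total j i with h | h
  · left
    exact mem_zpowers_pow_of_gcd_dvd (dvd_trans (by rw [hia, hjb]; exact pow_dvd_pow p h)
      (Nat.gcd_dvd_right _ _))
  · right
    exact mem_zpowers_pow_of_gcd_dvd (dvd_trans (by rw [hia, hjb]; exact pow_dvd_pow p h)
      (Nat.gcd_dvd_right _ _))

lemma adj_iff (hp : p.Prime) (hG : IsPGroup p G) {x y : G} :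
    (enhancedPowerGraph G).Adj x y ↔ x ≠ y ∧ (x ∈ zpowers y ∨ y ∈ zpowers x) := by
  constructor
  · rintro ⟨hne, z, hx, hy⟩
    obtain ⟨a, rfl⟩ := (Submonoid.mem_powers_iff _ _).1 (mem_powers_iff_mem_zpowers.2 hx)
    obtain ⟨b, rfl⟩ := (Submonoid.mem_powers_iff _ _).1 (mem_powers_iff_mem_zpowers.2 hy)
    refine ⟨hne, zpowers_comparable hp z ?_ a b⟩
    obtain ⟨k, hk⟩ := hG z
    obtain ⟨i, _, hi⟩ := (Nat.dvd_prime_pow hp).1 (orderOf_dvd_of_pow_eq_one hk)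
    exact ⟨i, hi⟩
  · rintro ⟨hne, h | h⟩
    · exact ⟨hne, y, h, mem_zpowers y⟩
    · exact ⟨hne, x, mem_zpowers x, h⟩

lemma adj_iff' (hp : p.Prime) (hG : IsPGroup p G) {x y : G} :
    (enhancedPowerGraph G).Adj x y ↔ x ≠ y ∧ y ∈ Nbr x := by
  rw [adj_iff hp hG]
  exact and_congr_right fun _ => or_comm

lemma adj_one {x : G} (hx : x ≠ 1) : (enhancedPowerGraph G).Adj x 1 :=
  ⟨hx, x, mem_zpowers x, one_mem _⟩

lemma epg_connected : (enhancedPowerGraph G).Connected := by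
  have h1 : ∀ w : G, (enhancedPowerGraph G).Reachable w 1 := by
    intro w
    by_cases hw : w = 1
    · subst hw; rfl
    · exact (adj_one hw).reachable
  exact (SimpleGraph.connected_iff_exists_forall_reachable _).2 ⟨1, fun w => (h1 w).symm⟩

lemma epg_dist_le_two (u v : G) : (enhancedPowerGraph G).dist u v ≤ 2 := by
  by_cases hne : u = v
  · subst hne; simp [SimpleGraph.dist_self]
  by_cases ha : (enhancedPowerGraph G).Adj u v
  · rw [SimpleGraph.dist_eq_one_iff_adj.2 ha]; omega
  have hu1 : u ≠ 1 := by
    rintro rfl; exact ha (adj_one (Ne.symm hne)).symm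
  have hv1 : v ≠ 1 := by
    rintro rfl; exact ha (adj_one hne)
  have hle := SimpleGraph.dist_le
    (SimpleGraph.Walk.cons (adj_one hu1) (adj_one hv1).symm.toWalk)
  simpa using hle

lemma epg_dist_two {u v : G} (hne : u ≠ v) (ha : ¬ (enhancedPowerGraph G).Adj u v) :
    (enhancedPowerGraph G).dist u v = 2 := by
  have h1 := epg_connected.pos_dist_of_ne hne
  have h2 := epg_dist_le_two u v
  have h3 : (enhancedPowerGraph G).dist u v ≠ 1 := fun h =>
    ha (SimpleGraph.dist_eq_one_iff_adj.1 h)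
  omega

/-- The strong-resolving condition for a set. -/
def Resolves (U : Set G) : Prop :=
  ∀ u v : G, u ≠ v → ∃ z ∈ U,
    (enhancedPowerGraph G).dist z u = (enhancedPowerGraph G).dist z v +
      (enhancedPowerGraph G).dist v u ∨
    (enhancedPowerGraph G).dist z v = (enhancedPowerGraph G).dist z u +
      (enhancedPowerGraph G).dist u v

lemma cover_of_resolving (hp : p.Prime) (hG : IsPGroup p G) {U : Set G} (hres : Resolves U)
    {u v : G} (hne : u ≠ v)
    (hbad : ¬ (enhancedPowerGraph G).Adj u v ∨ Nbr u = Nbr v) : u ∈ U ∨ v ∈ U := by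
  obtain ⟨z, hzU, heq⟩ := hres u v hne
  by_cases hzu : z = u
  · exact Or.inl (hzu ▸ hzU)
  by_cases hzv : z = v
  · exact Or.inr (hzv ▸ hzU)
  exfalso
  have d1 := epg_connected.pos_dist_of_ne hzu
  have d2 := epg_dist_le_two z u
  have d3 := epg_connected.pos_dist_of_ne hzv
  have d4 := epg_dist_le_two z v
  rcases hbad with hb | hb
  · have duv : (enhancedPowerGraph G).dist u v = 2 := epg_dist_two hne hb
    have dvu : (enhancedPowerGraph G).dist v u = 2 :=
      epg_dist_two hne.symm (fun h => hb h.symm)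
    omega
  · have hadj : (enhancedPowerGraph G).Adj z u ↔ (enhancedPowerGraph G).Adj z v := by
      rw [adj_iff' hp hG, adj_iff' hp hG]
      constructor
      · rintro ⟨-, h⟩
        refine ⟨hzv, ?_⟩
        have hzn : z ∈ Nbr u := Nbr_comm.1 h
        rw [hb] at hzn
        exact Nbr_comm.1 hzn
      · rintro ⟨-, h⟩
        refine ⟨hzu, ?_⟩
        have hzn : z ∈ Nbr v := Nbr_comm.1 h
        rw [← hb] at hzn
        exact Nbr_comm.1 hzn
    have hd : (enhancedPowerGraph G).dist z u = (enhancedPowerGraph G).dist z v := by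
      by_cases h : (enhancedPowerGraph G).Adj z u
      · rw [SimpleGraph.dist_eq_one_iff_adj.2 h, SimpleGraph.dist_eq_one_iff_adj.2 (hadj.1 h)]
      · rw [epg_dist_two hzu h, epg_dist_two hzv (fun hh => h (hadj.2 hh))]
    have duv := epg_connected.pos_dist_of_ne hne
    have dvu := epg_connected.pos_dist_of_ne hne.symm
    omega

lemma key_half (hp : p.Prime) (hG : IsPGroup p G) {U : Set G}
    (hcov : ∀ u v : G, u ≠ v → (¬ (enhancedPowerGraph G).Adj u v ∨ Nbr u = Nbr v) →
      u ∈ U ∨ v ∈ U)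
    {u v w : G} (hA : (enhancedPowerGraph G).Adj u v) (hwu : w ∈ Nbr u) (hwv : w ∉ Nbr v) :
    ∃ z ∈ U,
      (enhancedPowerGraph G).dist z u = (enhancedPowerGraph G).dist z v +
        (enhancedPowerGraph G).dist v u ∨
      (enhancedPowerGraph G).dist z v = (enhancedPowerGraph G).dist z u +
        (enhancedPowerGraph G).dist u v := by
  have hwv' : w ≠ v := fun h => hwv (h ▸ mem_Nbr_self v)
  have hAwv : ¬ (enhancedPowerGraph G).Adj w v := fun h =>
    hwv (Nbr_comm.1 ((adj_iff' hp hG).1 h).2)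
  rcases hcov w v hwv' (Or.inl hAwv) with hwU | hvU
  · have huNv : u ∈ Nbr v := Nbr_comm.1 ((adj_iff' hp hG).1 hA).2
    have hwu' : w ≠ u := fun h => hwv (h ▸ huNv)
    have hAwu : (enhancedPowerGraph G).Adj w u :=
      (adj_iff' hp hG).2 ⟨hwu', Nbr_comm.1 hwu⟩
    refine ⟨w, hwU, Or.inr ?_⟩
    rw [epg_dist_two hwv' hAwv, SimpleGraph.dist_eq_one_iff_adj.2 hAwu,
      SimpleGraph.dist_eq_one_iff_adj.2 hA]
  · exact ⟨v, hvU, Or.inl (by rw [SimpleGraph.dist_self, zero_add])⟩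

lemma resolving_of_cover (hp : p.Prime) (hG : IsPGroup p G) {U : Set G}
    (hcov : ∀ u v : G, u ≠ v → (¬ (enhancedPowerGraph G).Adj u v ∨ Nbr u = Nbr v) →
      u ∈ U ∨ v ∈ U) : Resolves U := by
  intro u v hne
  by_cases hbad : ¬ (enhancedPowerGraph G).Adj u v ∨ Nbr u = Nbr v
  · rcases hcov u v hne hbad with h | h
    · exact ⟨u, h, Or.inr (by rw [SimpleGraph.dist_self, zero_add])⟩
    · exact ⟨v, h, Or.inl (by rw [SimpleGraph.dist_self, zero_add])⟩
  · push_neg at hbad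
    obtain ⟨hA, hN⟩ := hbad
    have hex : ∃ w, (w ∈ Nbr u ∧ w ∉ Nbr v) ∨ (w ∈ Nbr v ∧ w ∉ Nbr u) := by
      by_contra hc
      push_neg at hc
      apply hN
      ext w
      exact ⟨fun h => (hc w).1 h, fun h => (hc w).2 h⟩
    obtain ⟨w, hw | hw⟩ := hex
    · exact key_half hp hG hcov hA hw.1 hw.2
    · obtain ⟨z, hz, h⟩ := key_half hp hG hcov hA.symm hw.1 hw.2
      exact ⟨z, hz, h.symm⟩

lemma exists_order_p_not_mem (hp : p.Prime) (hnc : ¬ IsCyclic G) {α : ℕ}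
    (hα : Monoid.exponent G = p ^ α) (hα1 : 1 ≤ α) {g : G} (hg : orderOf g = p ^ α) :
    ∃ t : G, orderOf t = p ∧ t ∉ zpowers g := by
  haveI := Fact.mk hp
  have hne : ∃ x : G, x ∉ zpowers g := by
    by_contra hc
    push_neg at hc
    exact hnc ⟨⟨g, fun x => hc x⟩⟩
  obtain ⟨x, hx⟩ := hne
  have hP : ∃ m, x ^ p ^ m ∈ zpowers g := by
    refine ⟨α, ?_⟩
    have h1 : x ^ p ^ α = 1 := by rw [← hα]; exact Monoid.pow_exponent_eq_one x
    rw [h1]; exact one_mem _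
  classical
  set m := Nat.find hP with hm_def
  have hm : x ^ p ^ m ∈ zpowers g := Nat.find_spec hP
  have hm0 : m ≠ 0 := by
    intro h
    rw [h] at hm
    simp only [pow_zero, pow_one] at hm
    exact hx hm
  set t' : G := x ^ p ^ (m - 1) with ht'
  have ht'notin : t' ∉ zpowers g := Nat.find_min hP (by omega)
  have ht'p : t' ^ p ∈ zpowers g := by
    rw [ht', ← pow_mul, ← pow_succ]
    have hmm : m - 1 + 1 = m := by omega
    rw [hmm]; exact hm
  obtain ⟨s, hs⟩ := mem_zpowers_iff.1 ht'p
  have hps : ∃ s' : ℤ, s = p * s' := by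
    have h1 : (t' ^ p) ^ p ^ (α - 1) = 1 := by
      rw [← pow_mul]
      have hpp : p * p ^ (α - 1) = p ^ α := by
        rw [← pow_succ']
        congr 1
        omega
      rw [hpp, ← hα]
      exact Monoid.pow_exponent_eq_one t'
    have h2 : g ^ (s * (p : ℤ) ^ (α - 1)) = 1 := by
      have hc : (p:ℤ) ^ (α-1) = ((p ^ (α-1) : ℕ) : ℤ) := by push_cast; ring
      rw [zpow_mul, hs, hc, zpow_natCast]
      exact h1
    have h3 : ((orderOf g : ℤ)) ∣ s * (p : ℤ) ^ (α - 1) := orderOf_dvd_iff_zpow_eq_one.2 h2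
    rw [hg] at h3
    push_cast at h3
    obtain ⟨c, hc⟩ := h3
    refine ⟨c, ?_⟩
    have hcast : (p : ℤ) ^ α = (p : ℤ) ^ (α - 1) * p := by
      rw [← pow_succ]
      congr 1
      omega
    rw [hcast] at hc
    have hnz : ((p : ℤ) ^ (α - 1)) ≠ 0 := by
      apply pow_ne_zero
      exact_mod_cast hp.ne_zero
    have heq : s * (p : ℤ) ^ (α - 1) = ((p : ℤ) * c) * (p : ℤ) ^ (α - 1) := by
      rw [hc]; ring
    exact_mod_cast mul_right_cancel₀ hnz heq
  obtain ⟨s', rfl⟩ := hps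
  refine ⟨t' * (g ^ s')⁻¹, ?_, ?_⟩
  · have h1 : (t' * (g ^ s')⁻¹) ^ p = 1 := by
      rw [mul_pow, inv_pow, ← zpow_natCast (g ^ s') p, ← zpow_mul, mul_comm s' (p : ℤ), ← hs]
      exact mul_inv_cancel _
    have h2 : t' * (g ^ s')⁻¹ ≠ 1 := by
      intro h
      apply ht'notin
      have heq : t' = g ^ s' := by
        rwa [mul_inv_eq_one] at h
      rw [heq]
      exact zpow_mem (mem_zpowers g) s'
    exact orderOf_eq_prime h1 h2
  · intro hmem
    apply ht'notin
    have heq : t' = (t' * (g ^ s')⁻¹) * g ^ s' := by group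
    rw [heq]
    exact mul_mem hmem (zpow_mem (mem_zpowers g) s')

lemma t_zpow_mem (hp : p.Prime) {t g : G} (ht : orderOf t = p) (htg : t ∉ zpowers g)
    {k : ℤ} (hk : t ^ k ∈ zpowers g) : t ^ k = 1 := by
  by_cases hd : ((orderOf t : ℤ)) ∣ k
  · exact orderOf_dvd_iff_zpow_eq_one.1 hd
  exfalso
  apply htg
  rw [ht] at hd
  have h1 : ¬ p ∣ k.natAbs := fun h => hd (Int.natCast_dvd.2 h)
  have h2 : Nat.Coprime p k.natAbs := (hp.coprime_iff_not_dvd).2 h1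
  have hcop : IsCoprime k ((p : ℤ)) := by
    rw [Int.isCoprime_iff_gcd_eq_one]
    have hgcd : Int.gcd k (p : ℤ) = Nat.gcd k.natAbs p := by
      simp [Int.gcd]
    rw [hgcd]
    exact Nat.coprime_comm.1 h2
  obtain ⟨a, b, hab⟩ := hcop
  have htp : t ^ (p : ℤ) = 1 := by
    rw [← ht, zpow_natCast]
    exact pow_orderOf_eq_one t
  have hteq : t = (t ^ k) ^ a * (t ^ (p : ℤ)) ^ b := by
    rw [← zpow_mul, ← zpow_mul, ← zpow_add, mul_comm k a, mul_comm (p : ℤ) b, hab, zpow_one]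
  rw [hteq, htp, one_zpow, mul_one]
  exact zpow_mem hk a

lemma orderOf_gpow (hp : p.Prime) {α : ℕ} {g : G} (hg : orderOf g = p ^ α) {i : ℕ}
    (hi : i ≤ α) : orderOf (g ^ p ^ (α - i)) = p ^ i := by
  rw [orderOf_pow, hg]
  have h1 : (p ^ α).gcd (p ^ (α - i)) = p ^ (α - i) :=
    Nat.gcd_eq_right (pow_dvd_pow p (by omega))
  rw [h1, Nat.pow_div (by omega) hp.pos]
  congr 1
  omega

lemma gpow_mem {α : ℕ} (g : G) {i j : ℕ} (hij : i ≤ j) (hj : j ≤ α) :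
    g ^ p ^ (α - i) ∈ zpowers (g ^ p ^ (α - j)) := by
  refine mem_zpowers_iff.2 ⟨(p ^ (j - i) : ℕ), ?_⟩
  show (g ^ p ^ (α - j)) ^ ((p ^ (j - i) : ℕ) : ℤ) = _
  rw [zpow_natCast, ← pow_mul, ← pow_add]
  have h : α - j + (j - i) = α - i := by omega
  rw [h]

lemma Nbr_witness (hp : p.Prime) {α : ℕ} {g t : G} (hg : orderOf g = p ^ α)
    (ht : orderOf t = p) (htg : t ∉ zpowers g) {i j : ℕ} (hij : i < j) (hj : j ≤ α) :
    Nbr (g ^ p ^ (α - i)) ≠ Nbr (g ^ p ^ (α - j)) := by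
  set xi : G := g ^ p ^ (α - i) with hxi
  set xj : G := g ^ p ^ (α - j) with hxj
  set z : G := xj * t with hz
  have hxj_mem : xj ∈ zpowers g := by
    refine mem_zpowers_iff.2 ⟨(p ^ (α - j) : ℕ), ?_⟩
    show g ^ ((p ^ (α - j) : ℕ) : ℤ) = xj
    rw [zpow_natCast]
  have hmemNi : z ∈ Nbr xi := by
    refine Or.inr (mem_zpowers_iff.2 ⟨(p ^ (j - i) : ℕ), ?_⟩)
    rw [zpow_natCast, hz, mul_pow, ← pow_mul]
    have h1 : t ^ p ^ (j - i) = 1 := by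
      apply orderOf_dvd_iff_pow_eq_one.1
      rw [ht]
      exact dvd_pow_self p (by omega)
    rw [h1, mul_one]
    have harith : p ^ (α - j) * p ^ (j - i) = p ^ (α - i) := by
      rw [← pow_add]
      congr 1
      omega
    rw [harith]
  have hnotNj : z ∉ Nbr xj := by
    rintro (hmem | hmem)
    · apply htg
      have hle : zpowers xj ≤ zpowers g := zpowers_le.2 hxj_mem
      have hzg : z ∈ zpowers g := hle hmem
      have hteq : t = xj⁻¹ * z := by rw [hz]; group
      rw [hteq]
      exact mul_mem (inv_mem hxj_mem) hzg
    · obtain ⟨k, hk⟩ := mem_zpowers_iff.1 hmem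
      rw [hz, mul_zpow] at hk
      have htk : t ^ k = xj ^ (1 - k : ℤ) := by
        have h0 : xj ^ (k : ℤ) * t ^ k = xj ^ (1 : ℤ) := by rw [zpow_one]; exact hk
        calc t ^ k = (xj ^ (k:ℤ))⁻¹ * (xj ^ (k:ℤ) * t ^ k) := by group
          _ = (xj ^ (k:ℤ))⁻¹ * xj ^ (1:ℤ) := by rw [h0]
          _ = xj ^ (1 - k : ℤ) := by rw [← zpow_neg, ← zpow_add]; congr 1; ring
      have htk_mem : t ^ k ∈ zpowers g := by
        rw [htk]
        exact zpow_mem hxj_mem _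
      have htk1 : t ^ k = 1 := t_zpow_mem hp ht htg htk_mem
      have hpk : ((p : ℤ)) ∣ k := by
        have h1 := orderOf_dvd_iff_zpow_eq_one.2 htk1
        rwa [ht] at h1
      have hxjk : xj ^ (1 - k : ℤ) = 1 := by rw [← htk, htk1]
      have hpj : ((p : ℤ)) ∣ (1 - k) := by
        have h2 := orderOf_dvd_iff_zpow_eq_one.2 hxjk
        rw [show orderOf xj = p ^ j from orderOf_gpow hp hg (by omega)] at h2
        refine dvd_trans ?_ h2
        exact_mod_cast dvd_pow_self (p:ℤ) (by omega : j ≠ 0)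
      have hd1 : ((p : ℤ)) ∣ 1 := by
        have h3 := dvd_add hpk hpj
        simpa using h3
      have hd2 : p ∣ 1 := by exact_mod_cast hd1
      have h5 := Nat.le_of_dvd one_pos hd2
      have h6 := hp.two_le
      omega
  intro h
  rw [h] at hmemNi
  exact hnotNj hmemNi

lemma indep_card_le (hp : p.Prime) (hG : IsPGroup p G) {α : ℕ}
    (hα : Monoid.exponent G = p ^ α) (T : Set G)
    (hT : ∀ x ∈ T, ∀ y ∈ T, x ≠ y → (enhancedPowerGraph G).Adj x y ∧ Nbr x ≠ Nbr y) :
    T.ncard ≤ α + 1 := by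
  have hinj : Set.InjOn orderOf T := by
    intro x hx y hy hxy
    by_contra hne
    obtain ⟨hadj, hN⟩ := hT x hx y hy hne
    rcases ((adj_iff hp hG).1 hadj).2 with h | h
    · apply hN
      apply Nbr_eq_of_zpowers_eq
      apply Subgroup.eq_of_le_of_card_ge (zpowers_le.2 h)
      rw [Nat.card_zpowers, Nat.card_zpowers, hxy]
    · apply hN
      apply (Nbr_eq_of_zpowers_eq ?_).symm
      apply Subgroup.eq_of_le_of_card_ge (zpowers_le.2 h)
      rw [Nat.card_zpowers, Nat.card_zpowers, hxy]
  have hmaps : ∀ x ∈ T, orderOf x ∈ ((p ^ α).divisors : Set ℕ) := by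
    intro x _
    rw [Finset.mem_coe, Nat.mem_divisors]
    exact ⟨hα ▸ Monoid.order_dvd_exponent x, pow_ne_zero _ hp.ne_zero⟩
  have h := Set.ncard_le_ncard_of_injOn orderOf hmaps hinj (Finset.finite_toSet _)
  rwa [Set.ncard_coe_finset, Nat.divisors_prime_pow hp, Finset.card_map,
    Finset.card_range] at h

lemma sdim_eq_of (n : ℕ) (hmem : ∃ U : Set G, Resolves U ∧ U.ncard = n)
    (hlb : ∀ U : Set G, Resolves U → n ≤ U.ncard) : sdim (enhancedPowerGraph G) = n := by
  unfold sdim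
  apply le_antisymm
  · exact Nat.sInf_le hmem
  · refine le_csInf ⟨n, hmem⟩ ?_
    rintro k ⟨U, hres, rfl⟩
    exact hlb U hres

end Stmt10Aux

/-- Let `p` be a prime and `G` a finite abelian `p`-group with exponent
`p^α`. If `G` is non-cyclic, the strong metric dimension of the enhanced power graph of `G`
is `|G| − (α + 1)`; if `G` is cyclic, it is `|G| − 1`. -/
theorem stmt_10 {G : Type*} [CommGroup G] [Fintype G] {p : ℕ} (hp : p.Prime)
    (hG : IsPGroup p G) (α : ℕ) (hα : Monoid.exponent G = p ^ α) :
    (¬ IsCyclic G → sdim (enhancedPowerGraph G) = Fintype.card G - (α + 1)) ∧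
    (IsCyclic G → sdim (enhancedPowerGraph G) = Fintype.card G - 1) := by
  open Subgroup in
  constructor
  · -- non-cyclic case
    intro hnc
    have hα1 : 1 ≤ α := by
      by_contra h
      have h0 : α = 0 := by omega
      subst h0
      rw [pow_zero] at hα
      apply hnc
      have hsub : ∀ x : G, x = 1 := by
        intro x
        have hx := Monoid.pow_exponent_eq_one x
        rwa [hα, pow_one] at hx
      exact ⟨⟨1, fun x => by rw [hsub x]; exact Subgroup.mem_zpowers 1⟩⟩
    obtain ⟨g, hg⟩ := Monoid.exists_orderOf_eq_exponent (Monoid.ExponentExists.of_finite (G := G))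
    rw [hα] at hg
    obtain ⟨t, ht, htg⟩ := exists_order_p_not_mem hp hnc hα hα1 hg
    classical
    set f : ℕ → G := fun i => g ^ p ^ (α - i) with hf
    set Sf : Finset G := (Finset.range (α + 1)).image f with hSf
    have hfinj : ∀ i ≤ α, ∀ j ≤ α, f i = f j → i = j := by
      intro i hi j hj hfij
      have h1 : orderOf (f i) = p ^ i := orderOf_gpow hp hg hi
      have h2 : orderOf (f j) = p ^ j := orderOf_gpow hp hg hj
      rw [hfij, h2] at h1
      exact (Nat.pow_right_injective hp.two_le h1.symm)
    have hcard : Sf.card = α + 1 := by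
      rw [hSf, Finset.card_image_of_injOn, Finset.card_range]
      intro i hi j hj h
      rw [Finset.mem_coe, Finset.mem_range] at hi hj
      exact hfinj i (by omega) j (by omega) h
    have hpair : ∀ x ∈ (↑Sf : Set G), ∀ y ∈ (↑Sf : Set G), x ≠ y →
        (enhancedPowerGraph G).Adj x y ∧ Nbr x ≠ Nbr y := by
      intro x hx y hy hne
      simp only [hSf, Finset.coe_image, Set.mem_image, Finset.coe_range, Set.mem_Iio]
        at hx hy
      obtain ⟨i, hi, rfl⟩ := hx
      obtain ⟨j, hj, rfl⟩ := hy
      rcases lt_trichotomy i j with h | h | h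
      · exact ⟨(adj_iff hp hG).2 ⟨hne, Or.inl (gpow_mem g h.le (by omega))⟩,
          Nbr_witness hp hg ht htg h (by omega)⟩
      · exact absurd (by rw [h]) hne
      · exact ⟨(adj_iff hp hG).2 ⟨hne, Or.inr (gpow_mem g h.le (by omega))⟩,
          (Nbr_witness hp hg ht htg h (by omega)).symm⟩
    apply sdim_eq_of
    · refine ⟨(↑Sf : Set G)ᶜ, ?_, ?_⟩
      · apply resolving_of_cover hp hG
        intro u v hne hbad
        by_contra hc
        push_neg at hc
        obtain ⟨hu, hv⟩ := hc
        rw [Set.notMem_compl_iff] at hu hv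
        obtain ⟨hadj', hN⟩ := hpair u hu v hv hne
        rcases hbad with h | h
        · exact h hadj'
        · exact hN h
      · have h2 := Set.ncard_add_ncard_compl (↑Sf : Set G)
        rw [Set.ncard_coe_finset, hcard, Nat.card_eq_fintype_card] at h2
        omega
    · intro U hres
      have hT : ∀ x ∈ Uᶜ, ∀ y ∈ Uᶜ, x ≠ y →
          (enhancedPowerGraph G).Adj x y ∧ Nbr x ≠ Nbr y := by
        intro x hx y hy hne
        by_contra hc
        push_neg at hc
        have hbad : ¬ (enhancedPowerGraph G).Adj x y ∨ Nbr x = Nbr y := by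
          by_cases hA : (enhancedPowerGraph G).Adj x y
          · exact Or.inr (hc hA)
          · exact Or.inl hA
        rcases cover_of_resolving hp hG hres hne hbad with h | h
        · exact hx h
        · exact hy h
      have h1 := indep_card_le hp hG hα (Uᶜ) hT
      have h2 := Set.ncard_add_ncard_compl U
      rw [Nat.card_eq_fintype_card] at h2
      omega
  · -- cyclic case
    intro hcy
    obtain ⟨g, hgen⟩ := hcy
    have hadj : ∀ u v : G, u ≠ v → (enhancedPowerGraph G).Adj u v := by
      intro u v h
      obtain ⟨a, ha⟩ := hgen u
      obtain ⟨b, hb⟩ := hgen v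
      exact ⟨h, g, ⟨a, ha⟩, ⟨b, hb⟩⟩
    apply sdim_eq_of
    · refine ⟨({(1 : G)} : Set G)ᶜ, ?_, ?_⟩
      · intro u v hne
        by_cases hu : u = 1
        · have hv : v ≠ 1 := fun h => hne (by rw [hu, h])
          exact ⟨v, by simpa using hv, Or.inl (by rw [SimpleGraph.dist_self, zero_add])⟩
        · exact ⟨u, by simpa using hu, Or.inr (by rw [SimpleGraph.dist_self, zero_add])⟩
      · have h := Set.ncard_add_ncard_compl ({(1 : G)} : Set G)
        rw [Set.ncard_singleton, Nat.card_eq_fintype_card] at h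
        omega
    · intro U hres
      have hsub : (Uᶜ : Set G).Subsingleton := by
        intro u hu v hv
        by_contra hne
        obtain ⟨z, hzU, heq⟩ := hres u v hne
        have hzu : z ≠ u := fun h => hu (h ▸ hzU)
        have hzv : z ≠ v := fun h => hv (h ▸ hzU)
        rw [SimpleGraph.dist_eq_one_iff_adj.2 (hadj z u hzu),
          SimpleGraph.dist_eq_one_iff_adj.2 (hadj z v hzv),
          SimpleGraph.dist_eq_one_iff_adj.2 (hadj u v hne),
          SimpleGraph.dist_eq_one_iff_adj.2 (hadj v u (Ne.symm hne))] at heq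
        omega
      have h1 : (Uᶜ : Set G).ncard ≤ 1 := by
        rcases hsub.eq_empty_or_singleton with h | ⟨a, h⟩
        · rw [h]; simp
        · rw [h]; simp
      have h2 := Set.ncard_add_ncard_compl U
      rw [Nat.card_eq_fintype_card] at h2
      omega
end

section
/- Let n ≥ 1 and write n = 3^k · t with k ≥ 0 and 3 ∤ t. In the group U_{6n} = ⟨a, b : a^{2n} = b^3 = e, ba = ab^{-1}⟩, the group is the union U_{6n} = ⟨a⟩ ∪ ⟨ab⟩ ∪ ⟨ab^2⟩ ∪ ⋃_{i=0}^{k} ( ⟨a^{2·3^i} b⟩ ∪ ⟨a^{2·3^i} b^2⟩ ). -/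
lemma exists_pow3_aux : ∀ (N : ℕ) (j : ℤ), j ≠ 0 → j.natAbs ≤ N →
    ∃ (v : ℕ) (j' : ℤ), j = 3 ^ v * j' ∧ ¬ (3:ℤ) ∣ j' := by
  intro N
  induction N with
  | zero => intro j hj hle; exact absurd (Int.natAbs_eq_zero.mp (Nat.le_zero.mp hle)) hj
  | succ N ih =>
    intro j hj hle
    by_cases h3 : (3:ℤ) ∣ j
    · obtain ⟨j0, hj0⟩ := h3
      have hj0ne : j0 ≠ 0 := by rintro rfl; simp at hj0; exact hj hj0
      have habs : j0.natAbs ≤ N := by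
        have h1 : j.natAbs = 3 * j0.natAbs := by rw [hj0, Int.natAbs_mul]; rfl
        have h2 : 1 ≤ j0.natAbs := Nat.one_le_iff_ne_zero.mpr (Int.natAbs_ne_zero.mpr hj0ne)
        omega
      obtain ⟨v, j', h1, h2⟩ := ih j0 hj0ne habs
      exact ⟨v + 1, j', by rw [hj0, h1, pow_succ]; ring, h2⟩
    · exact ⟨0, j, by ring, h3⟩

lemma exists_pow3 (j : ℤ) (hj : j ≠ 0) :
    ∃ (v : ℕ) (j' : ℤ), j = 3 ^ v * j' ∧ ¬ (3:ℤ) ∣ j' :=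
  exists_pow3_aux j.natAbs j hj le_rfl

/-- In `U_{6n} = ⟨a, b : a^{2n} = b³ = e, ba = ab⁻¹⟩`, with `n = 3^k·t`,
`3 ∤ t`, the group is the union
`⟨a⟩ ∪ ⟨ab⟩ ∪ ⟨ab²⟩ ∪ ⋃_{i=0}^{k} (⟨a^{2·3^i}b⟩ ∪ ⟨a^{2·3^i}b²⟩)`. -/
theorem stmt_11 {G : Type*} [Group G] [Fintype G] (n k t : ℕ) (hn : 1 ≤ n)
    (hnkt : n = 3 ^ k * t) (h3t : ¬ 3 ∣ t)
    (a b : G) (ha : a ^ (2 * n) = 1) (hb : b ^ 3 = 1) (hba : b * a = a * b⁻¹)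
    (hcard : Fintype.card G = 6 * n) (hgen : Subgroup.closure {a, b} = ⊤) :
    ∀ x : G, x ∈ Subgroup.zpowers a ∨ x ∈ Subgroup.zpowers (a * b) ∨
      x ∈ Subgroup.zpowers (a * b ^ 2) ∨
      ∃ i ≤ k, x ∈ Subgroup.zpowers (a ^ (2 * 3 ^ i) * b) ∨
        x ∈ Subgroup.zpowers (a ^ (2 * 3 ^ i) * b ^ 2) := by
  -- basic relations
  have hinvba : a * b = b⁻¹ * a := by
    calc a * b = b⁻¹ * (b * a) * b := by group
    _ = b⁻¹ * (a * b⁻¹) * b := by rw [hba]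
    _ = b⁻¹ * a := by group
  have hswapz : ∀ q : ℤ, b ^ q * a = a * b ^ (-q) := by
    intro q
    induction q using Int.induction_on with
    | zero => simp
    | succ i ih =>
      calc b ^ ((i:ℤ) + 1) * a = b ^ (i:ℤ) * (b * a) := by group
      _ = b ^ (i:ℤ) * (a * b⁻¹) := by rw [hba]
      _ = (b ^ (i:ℤ) * a) * b⁻¹ := by group
      _ = (a * b ^ (-(i:ℤ))) * b⁻¹ := by rw [ih]
      _ = a * b ^ (-((i:ℤ) + 1)) := by group
    | pred i ih =>
      calc b ^ (-(i:ℤ) - 1) * a = b ^ (-(i:ℤ)) * (b⁻¹ * a) := by group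
      _ = b ^ (-(i:ℤ)) * (a * b) := by rw [← hinvba]
      _ = (b ^ (-(i:ℤ)) * a) * b := by group
      _ = (a * b ^ (-(-(i:ℤ)))) * b := by rw [ih]
      _ = a * b ^ (-(-(i:ℤ) - 1)) := by group
  have hswapz' : ∀ q : ℤ, b ^ q * a⁻¹ = a⁻¹ * b ^ (-q) := by
    intro q
    have h := hswapz (-q)
    rw [neg_neg] at h
    calc b ^ q * a⁻¹ = a⁻¹ * (a * b ^ q) * a⁻¹ := by group
    _ = a⁻¹ * (b ^ (-q) * a) * a⁻¹ := by rw [h]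
    _ = a⁻¹ * b ^ (-q) := by group
  -- normal form: every element is a^p * b^q
  have hmove : ∀ (p q : ℤ), ∃ q2 : ℤ, b ^ q * a ^ p = a ^ p * b ^ q2 := by
    intro p
    induction p using Int.induction_on with
    | zero => intro q; exact ⟨q, by simp⟩
    | succ i ih =>
      intro q
      obtain ⟨q2, h⟩ := ih q
      refine ⟨-q2, ?_⟩
      calc b ^ q * a ^ ((i:ℤ) + 1) = (b ^ q * a ^ (i:ℤ)) * a := by group
      _ = (a ^ (i:ℤ) * b ^ q2) * a := by rw [h]
      _ = a ^ (i:ℤ) * (b ^ q2 * a) := by group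
      _ = a ^ (i:ℤ) * (a * b ^ (-q2)) := by rw [hswapz]
      _ = a ^ ((i:ℤ) + 1) * b ^ (-q2) := by group
    | pred i ih =>
      intro q
      obtain ⟨q2, h⟩ := ih q
      refine ⟨-q2, ?_⟩
      calc b ^ q * a ^ (-(i:ℤ) - 1) = (b ^ q * a ^ (-(i:ℤ))) * a⁻¹ := by group
      _ = (a ^ (-(i:ℤ)) * b ^ q2) * a⁻¹ := by rw [h]
      _ = a ^ (-(i:ℤ)) * (b ^ q2 * a⁻¹) := by group
      _ = a ^ (-(i:ℤ)) * (a⁻¹ * b ^ (-q2)) := by rw [hswapz']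
      _ = a ^ (-(i:ℤ) - 1) * b ^ (-q2) := by group
  have hnf : ∀ x : G, ∃ p q : ℤ, x = a ^ p * b ^ q := by
    intro x
    have hx : x ∈ Subgroup.closure {a, b} := hgen ▸ Subgroup.mem_top x
    induction hx using Subgroup.closure_induction with
    | mem z hz =>
      rcases hz with rfl | rfl
      · exact ⟨1, 0, by simp⟩
      · exact ⟨0, 1, by simp⟩
    | one => exact ⟨0, 0, by simp⟩
    | mul x y hx hy ihx ihy =>
      obtain ⟨p, q, rfl⟩ := ihx
      obtain ⟨p', q', rfl⟩ := ihy
      obtain ⟨q2, h⟩ := hmove p' q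
      refine ⟨p + p', q2 + q', ?_⟩
      rw [zpow_add, zpow_add]
      calc a ^ p * b ^ q * (a ^ p' * b ^ q') = a ^ p * (b ^ q * a ^ p') * b ^ q' := by group
      _ = a ^ p * (a ^ p' * b ^ q2) * b ^ q' := by rw [h]
      _ = a ^ p * a ^ p' * (b ^ q2 * b ^ q') := by group
    | inv x hx ihx =>
      obtain ⟨p, q, rfl⟩ := ihx
      obtain ⟨q2, h⟩ := hmove (-p) (-q)
      refine ⟨-p, q2, ?_⟩
      calc (a ^ p * b ^ q)⁻¹ = b ^ (-q) * a ^ (-p) := by group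
      _ = a ^ (-p) * b ^ q2 := by rw [h]
  -- periodicity lemmas
  have hb3z : (b : G) ^ (3:ℤ) = 1 := by
    rw [show (3:ℤ) = ((3:ℕ):ℤ) by norm_num, zpow_natCast, hb]
  have hbmod : ∀ u v : ℤ, (3:ℤ) ∣ (u - v) → b ^ u = b ^ v := by
    intro u v hdvd
    obtain ⟨c, hc⟩ := hdvd
    have hu : u = v + 3 * c := by omega
    rw [hu, zpow_add, zpow_mul, hb3z, one_zpow, mul_one]
  have haz : (a : G) ^ ((2 * (n:ℤ))) = 1 := by
    rw [show (2 * (n:ℤ)) = ((2*n : ℕ):ℤ) by push_cast; ring, zpow_natCast, ha]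
  have hamod : ∀ u v : ℤ, (2 * (n:ℤ)) ∣ (u - v) → a ^ u = a ^ v := by
    intro u v hdvd
    obtain ⟨c, hc⟩ := hdvd
    have hu : u = v + (2 * (n:ℤ)) * c := by omega
    rw [hu, zpow_add, zpow_mul, haz, one_zpow, mul_one]
  -- commuting powers
  have h2comm : Commute (a ^ 2) b := by
    show a ^ 2 * b = b * a ^ 2
    calc a ^ 2 * b = a * (a * b) := by rw [pow_two, mul_assoc]
    _ = a * (b⁻¹ * a) := by rw [hinvba]
    _ = (a * b⁻¹) * a := by group
    _ = (b * a) * a := by rw [← hba]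
    _ = b * a ^ 2 := by rw [pow_two, mul_assoc]
  have hgp : ∀ (s r : ℕ) (m : ℤ),
      (a ^ (2 * s) * b ^ r) ^ m = a ^ ((2 * ((s:ℕ):ℤ)) * m) * b ^ (((r:ℕ):ℤ) * m) := by
    intro s r m
    have hc : Commute (a ^ (2 * s)) (b ^ r) := by
      rw [pow_mul]
      exact h2comm.pow_pow s r
    rw [hc.mul_zpow, ← zpow_natCast a (2 * s), ← zpow_mul, ← zpow_natCast b r, ← zpow_mul]
    push_cast
    ring_nf
  -- odd-power formulas for a*b and a*b^2
  have habsq : (a * b) * (a * b) = a * a := by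
    calc (a * b) * (a * b) = a * (b * a) * b := by group
    _ = a * (a * b⁻¹) * b := by rw [hba]
    _ = a * a := by group
  have hab2sq : (a * b ^ 2) * (a * b ^ 2) = a * a := by
    have h2 := hswapz 2
    calc (a * b ^ 2) * (a * b ^ 2) = a * (b ^ (2:ℤ) * a) * b ^ (2:ℤ) := by group
    _ = a * (a * b ^ (-2:ℤ)) * b ^ (2:ℤ) := by rw [h2]
    _ = a * a := by group
  have hoddpow : ∀ (c : G), c * c = a * a → ∀ m : ℤ, c ^ (2 * m + 1) = a ^ (2 * m) * c := by
    intro c hc m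
    have h1 : c ^ (2 * m) = a ^ (2 * m) := by
      have h2 : c ^ (2:ℤ) = a ^ (2:ℤ) := by rw [zpow_two, zpow_two, hc]
      calc c ^ (2 * m) = (c ^ (2:ℤ)) ^ m := by rw [← zpow_mul]
      _ = (a ^ (2:ℤ)) ^ m := by rw [h2]
      _ = a ^ (2 * m) := by rw [← zpow_mul]
    rw [zpow_add, h1, zpow_one]
  -- casts
  have hnz : (n:ℤ) = 3 ^ k * t := by exact_mod_cast hnkt
  have h3tz : ¬ (3:ℤ) ∣ (t:ℤ) := by exact_mod_cast h3t
  have ht2 : ∃ w : ℤ, 1 - (t:ℤ) * (t:ℤ) = 3 * w := by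
    obtain ⟨s, hs⟩ : ∃ s : ℤ, (t:ℤ) = 3 * s + 1 ∨ (t:ℤ) = 3 * s + 2 := ⟨(t:ℤ) / 3, by omega⟩
    rcases hs with h | h
    · exact ⟨-(3 * s * s + 2 * s), by rw [h]; ring⟩
    · exact ⟨-(3 * s * s + 4 * s + 1), by rw [h]; ring⟩
  -- main argument
  intro x
  obtain ⟨p, q, rfl⟩ := hnf x
  have key : ∀ r : ℤ, (r = 1 ∨ r = 2) → q % 3 = r →
      (a ^ p * b ^ q ∈ Subgroup.zpowers a ∨ a ^ p * b ^ q ∈ Subgroup.zpowers (a * b) ∨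
      a ^ p * b ^ q ∈ Subgroup.zpowers (a * b ^ 2) ∨
      ∃ i ≤ k, a ^ p * b ^ q ∈ Subgroup.zpowers (a ^ (2 * 3 ^ i) * b) ∨
        a ^ p * b ^ q ∈ Subgroup.zpowers (a ^ (2 * 3 ^ i) * b ^ 2)) := by
    intro r hr12 hqr
    rcases Int.even_or_odd p with ⟨m, hm⟩ | ⟨m, hm⟩
    · -- even case: p = 2*m
      have hm' : p = 2 * m := by omega
      by_cases hdk : (3:ℤ) ^ k ∣ m
      · -- case A: use i = k
        obtain ⟨j2, hj2⟩ := hdk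
        refine Or.inr (Or.inr (Or.inr ⟨k, le_rfl, Or.inl
          ⟨j2 + (t:ℤ) * ((r - j2) * (t:ℤ)), ?_⟩⟩))
        set mm : ℤ := j2 + (t:ℤ) * ((r - j2) * (t:ℤ)) with hmm
        show (a ^ (2 * 3 ^ k) * b) ^ mm = a ^ p * b ^ q
        have dvd1 : (2 * (n:ℤ)) ∣ ((2 * (((3:ℕ) ^ k : ℕ):ℤ)) * mm - p) := by
          refine ⟨(r - j2) * (t:ℤ), ?_⟩
          rw [hm', hj2, hnz, hmm]
          push_cast
          ring
        have d1 : (3:ℤ) ∣ (mm - r) := by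
          obtain ⟨w, hw⟩ := ht2
          exact ⟨(j2 - r) * w, by rw [hmm]; linear_combination (j2 - r) * hw⟩
        have d2 : (3:ℤ) ∣ (q - r) := by omega
        have dq : (3:ℤ) ∣ (((1:ℕ):ℤ) * mm - q) := by push_cast; omega
        calc (a ^ (2 * 3 ^ k) * b) ^ mm
            = (a ^ (2 * 3 ^ k) * b ^ 1) ^ mm := by rw [pow_one]
          _ = a ^ ((2 * (((3:ℕ) ^ k : ℕ):ℤ)) * mm) * b ^ (((1:ℕ):ℤ) * mm) := hgp (3 ^ k) 1 mm
          _ = a ^ p * b ^ q := by rw [hamod _ p dvd1, hbmod _ q dq]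
      · -- case B: use the 3-adic valuation of m
        have hm0 : m ≠ 0 := by rintro rfl; exact hdk (dvd_zero _)
        obtain ⟨v, j', hj', h3j'⟩ := exists_pow3 m hm0
        have hvk : v ≤ k := by
          by_contra hvk
          push_neg at hvk
          exact hdk ((pow_dvd_pow 3 hvk.le).trans ⟨j', hj'⟩)
        have hexp : (2 * (((3:ℕ) ^ v : ℕ):ℤ)) * j' = p := by
          rw [hm', hj']; push_cast; ring
        have hsplit : (3:ℤ) ∣ (j' - q) ∨ (3:ℤ) ∣ (2 * j' - q) := by
          have hj3 : j' % 3 = 1 ∨ j' % 3 = 2 := by omega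
          rcases hj3 with h | h <;> rcases hr12 with rfl | rfl <;> omega
        rcases hsplit with hd | hd
        · refine Or.inr (Or.inr (Or.inr ⟨v, hvk, Or.inl ⟨j', ?_⟩⟩))
          show (a ^ (2 * 3 ^ v) * b) ^ j' = a ^ p * b ^ q
          have hd1 : (3:ℤ) ∣ (((1:ℕ):ℤ) * j' - q) := by push_cast; omega
          calc (a ^ (2 * 3 ^ v) * b) ^ j'
              = (a ^ (2 * 3 ^ v) * b ^ 1) ^ j' := by rw [pow_one]
            _ = a ^ ((2 * (((3:ℕ) ^ v : ℕ):ℤ)) * j') * b ^ (((1:ℕ):ℤ) * j') := hgp (3 ^ v) 1 j'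
            _ = a ^ p * b ^ q := by rw [hexp, hbmod _ q hd1]
        · refine Or.inr (Or.inr (Or.inr ⟨v, hvk, Or.inr ⟨j', ?_⟩⟩))
          show (a ^ (2 * 3 ^ v) * b ^ 2) ^ j' = a ^ p * b ^ q
          have hd2 : (3:ℤ) ∣ (((2:ℕ):ℤ) * j' - q) := by push_cast; omega
          calc (a ^ (2 * 3 ^ v) * b ^ 2) ^ j'
              = a ^ ((2 * (((3:ℕ) ^ v : ℕ):ℤ)) * j') * b ^ (((2:ℕ):ℤ) * j') := hgp (3 ^ v) 2 j'
            _ = a ^ p * b ^ q := by rw [hexp, hbmod _ q hd2]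
    · -- odd case: p = 2*m + 1
      rcases hr12 with rfl | rfl
      · refine Or.inr (Or.inl ⟨2 * m + 1, ?_⟩)
        show (a * b) ^ (2 * m + 1) = a ^ p * b ^ q
        rw [hoddpow (a * b) habsq m, hm, hbmod q 1 (by omega)]
        group
      · refine Or.inr (Or.inr (Or.inl ⟨2 * m + 1, ?_⟩))
        show (a * b ^ 2) ^ (2 * m + 1) = a ^ p * b ^ q
        rw [hoddpow (a * b ^ 2) hab2sq m, hm, hbmod q 2 (by omega)]
        group
  have hq3 : q % 3 = 0 ∨ q % 3 = 1 ∨ q % 3 = 2 := by omega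
  rcases hq3 with hr | hr | hr
  · left
    refine ⟨p, ?_⟩
    show a ^ p = a ^ p * b ^ q
    rw [hbmod q 0 (by omega), zpow_zero, mul_one]
  · exact key 1 (Or.inl rfl) hr
  · exact key 2 (Or.inr rfl) hr
end

section
/- Let n ≥ 1 and write n = 3^k · t with k ≥ 0 and 3 ∤ t. In U_{6n} = ⟨a, b : a^{2n} = b^3 = e, ba = ab^{-1}⟩, set P_i = ⟨a^{2·3^i} b⟩ for 0 ≤ i ≤ k and P_{k+1} = ⟨ab⟩. For 0 ≤ i ≤ k+1 and any x ∈ P_i \ ⟨a⟩, a vertex y ∈ U_{6n} is adjacent to x in the enhanced power graph of U_{6n} if and only if y ∈ P_i (and y ≠ x). -/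
set_option linter.unusedSectionVars false
set_option linter.unusedVariables false


section AuxU6n
variable {G : Type*} [Group G]


lemma u6_coprime3 (t : ℤ) (ht : ¬ (3:ℤ) ∣ t) : IsCoprime (3:ℤ) t := by
  have hp : Prime (3:ℤ) := Int.prime_three
  exact (hp.coprime_iff_not_dvd).2 ht

lemma u6_arith (kk ii : ℕ) (hik : ii ≤ kk) (t : ℤ) (ht : ¬ (3:ℤ) ∣ t)
    (u v e m : ℤ) (hm : ¬ (3:ℤ) ∣ m)
    (h1 : (3^kk * t : ℤ) ∣ (3^ii * m - u * e)) (h2 : (3:ℤ) ∣ (m - v * e)) :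
    ∃ w : ℤ, (3^kk * t : ℤ) ∣ (3^ii * w - u) ∧ (3:ℤ) ∣ (w - v) := by
  have he3 : ¬ (3:ℤ) ∣ e := by
    rintro ⟨c, rfl⟩
    obtain ⟨d2, hd2⟩ := h2
    exact hm ⟨d2 + v * c, by linarith⟩
  have hc3e : IsCoprime (3:ℤ) e := (Int.prime_three.coprime_iff_not_dvd).2 he3
  have hc3t : IsCoprime (3:ℤ) t := (Int.prime_three.coprime_iff_not_dvd).2 ht
  obtain ⟨c, d, hcd⟩ : ∃ c d, c * e + d * 3^(kk+1) = 1 := (IsCoprime.pow_right hc3e.symm : IsCoprime e (3^(kk+1)))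
  obtain ⟨p, q, hpq⟩ : ∃ p q, p * 3^(kk+1) + q * t = 1 := (IsCoprime.pow_left hc3t : IsCoprime (3^(kk+1)) t)
  obtain ⟨α, β, hαβ⟩ : ∃ α β, α * 3^ii + β * t = 1 := (IsCoprime.pow_left hc3t : IsCoprime (3^ii) t)
  obtain ⟨c1, hc1⟩ := h1
  obtain ⟨d2, hd2⟩ := h2
  set D := m * c with hD
  set s := α * u with hs
  set w := D * q * t + s * p * 3^(kk+1) with hw
  have hA1 : w - D = 3^(kk+1) * (s * p - D * p) := by
    rw [hw]; linear_combination D * hpq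
  have hA2 : w - s = t * (D * q - s * q) := by
    rw [hw]; linear_combination s * hpq
  have hA3 : 3^ii * D - u = 3^kk * (c * t * c1 - 3 * u * d) := by
    rw [hD]; linear_combination c * hc1 + u * hcd
  have hA4 : 3^ii * s - u = t * (-u * β) := by
    rw [hs]; linear_combination u * hαβ
  have hA5 : D - v = 3 * (c * d2 - v * d * 3^kk) := by
    rw [hD]; linear_combination c * hd2 + v * hcd
  refine ⟨w, ?_, ?_⟩
  · have hcop : IsCoprime ((3:ℤ)^kk) t := hc3t.pow_left
    apply hcop.mul_dvd
    · refine ⟨3^(ii+1) * (s * p - D * p) + (c * t * c1 - 3 * u * d), ?_⟩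
      have hsplit : (3:ℤ)^ii * w - u = 3^ii * (w - D) + (3^ii * D - u) := by ring
      rw [hsplit, hA1, hA3]
      ring
    · refine ⟨3^ii * (D * q - s * q) + (-u * β), ?_⟩
      have hsplit : (3:ℤ)^ii * w - u = 3^ii * (w - s) + (3^ii * s - u) := by ring
      rw [hsplit, hA2, hA4]
      ring
  · refine ⟨3^kk * (s * p - D * p) + (c * d2 - v * d * 3^kk), ?_⟩
    have hsplit : w - v = (w - D) + (D - v) := by ring
    rw [hsplit, hA1, hA5]
    ring




lemma u6_conj (a b : G) (hba : b * a = a * b⁻¹) : ∀ v : ℤ, b ^ v * a = a * b ^ (-v) := by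
  have h1 : a⁻¹ * b * (a⁻¹)⁻¹ = b⁻¹ := by rw [inv_inv, mul_assoc, hba]; group
  intro v
  have h2 : (a⁻¹ * b * (a⁻¹)⁻¹) ^ v = a⁻¹ * b ^ v * (a⁻¹)⁻¹ := conj_zpow
  rw [h1, inv_inv] at h2
  have h3 : a⁻¹ * b ^ v * a = b ^ (-v) := by rw [← h2, inv_zpow, zpow_neg]
  calc b ^ v * a = a * (a⁻¹ * b ^ v * a) := by group
    _ = a * b ^ (-v) := by rw [h3]

lemma u6_comm_even (a b : G) (hba : b * a = a * b⁻¹) :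
    ∀ u v : ℤ, Commute (a ^ (2 * u)) (b ^ v) := by
  have hba' : b⁻¹ * a = a * b := by
    have := u6_conj a b hba (-1)
    simpa using this
  have h2 : Commute (a ^ (2:ℤ)) b := by
    show a ^ (2:ℤ) * b = b * a ^ (2:ℤ)
    have : b * (a * a) = a * a * b := by
      calc b * (a * a) = (b * a) * a := by group
        _ = a * (b⁻¹ * a) := by rw [hba]; group
        _ = a * (a * b) := by rw [hba']
        _ = a * a * b := by group
    rw [show (2:ℤ) = 1 + 1 from rfl, zpow_add, zpow_one]
    exact this.symm
  intro u v
  have h3 := h2.zpow_zpow u v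
  rwa [← zpow_mul] at h3

lemma u6_move_odd (a b : G) (hba : b * a = a * b⁻¹) (v u : ℤ) :
    b ^ v * a ^ (2 * u + 1) = a ^ (2 * u + 1) * b ^ (-v) := by
  calc b ^ v * a ^ (2 * u + 1) = (b ^ v * a ^ (2 * u)) * a := by
        rw [zpow_add, zpow_one]; group
    _ = (a ^ (2 * u) * b ^ v) * a := by rw [← (u6_comm_even a b hba u v).eq]
    _ = a ^ (2 * u) * (b ^ v * a) := by group
    _ = a ^ (2 * u) * (a * b ^ (-v)) := by rw [u6_conj a b hba v]
    _ = a ^ (2 * u + 1) * b ^ (-v) := by rw [zpow_add, zpow_one]; group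

lemma u6_pow_even (a b : G) (hba : b * a = a * b⁻¹) (u v e : ℤ) :
    (a ^ (2 * u) * b ^ v) ^ e = a ^ (2 * u * e) * b ^ (v * e) := by
  have hc := u6_comm_even a b hba u v
  rw [hc.mul_zpow, ← zpow_mul, ← zpow_mul]

lemma u6_pow_odd (a b : G) (p v : ℤ) (hmv : b ^ v * a ^ p = a ^ p * b ^ (-v)) (q : ℤ) :
    (a ^ p * b ^ v) ^ (2 * q) = a ^ (p * (2 * q)) ∧
      (a ^ p * b ^ v) ^ (2 * q + 1) = a ^ (p * (2 * q) + p) * b ^ v := by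
  have hzz : (a ^ p * b ^ v) * (a ^ p * b ^ v) = a ^ (p + p) := by
    calc (a ^ p * b ^ v) * (a ^ p * b ^ v) = a ^ p * (b ^ v * a ^ p) * b ^ v := by group
      _ = a ^ p * (a ^ p * b ^ (-v)) * b ^ v := by rw [hmv]
      _ = a ^ (p + p) := by rw [zpow_add]; group
  have h2 : (a ^ p * b ^ v) ^ (2:ℤ) = a ^ (p + p) := by
    rw [show (2:ℤ) = 1 + 1 from rfl, zpow_add, zpow_one, hzz]
  have he : (a ^ p * b ^ v) ^ (2 * q) = a ^ (p * (2 * q)) := by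
    rw [zpow_mul, h2, ← zpow_mul]
    congr 1
    ring
  refine ⟨he, ?_⟩
  rw [zpow_add, zpow_one, he, ← mul_assoc, ← zpow_add]

lemma u6_move (a b : G) (hba : b * a = a * b⁻¹) :
    ∀ v q : ℤ, ∃ v' : ℤ, b ^ v * a ^ q = a ^ q * b ^ v' := by
  intro v q
  rcases Int.even_or_odd q with ⟨u, hu⟩ | ⟨u, hu⟩
  · exact ⟨v, by rw [hu, show u + u = 2 * u by ring]; exact ((u6_comm_even a b hba u v).eq).symm⟩
  · exact ⟨-v, by rw [hu]; exact u6_move_odd a b hba v u⟩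

lemma u6_surj (a b : G) (hba : b * a = a * b⁻¹) (hgen : Subgroup.closure {a, b} = ⊤) :
    ∀ g : G, ∃ p v : ℤ, g = a ^ p * b ^ v := by
  let S : Subgroup G :=
    { carrier := {g | ∃ p v : ℤ, g = a ^ p * b ^ v}
      one_mem' := ⟨0, 0, by simp⟩
      mul_mem' := by
        rintro x y ⟨p, v, rfl⟩ ⟨q, w, rfl⟩
        obtain ⟨v', hv'⟩ := u6_move a b hba v q
        refine ⟨p + q, v' + w, ?_⟩
        calc (a ^ p * b ^ v) * (a ^ q * b ^ w) = a ^ p * (b ^ v * a ^ q) * b ^ w := by group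
          _ = a ^ p * (a ^ q * b ^ v') * b ^ w := by rw [hv']
          _ = a ^ (p + q) * b ^ (v' + w) := by rw [zpow_add, zpow_add]; group
      inv_mem' := by
        rintro x ⟨p, v, rfl⟩
        obtain ⟨v', hv'⟩ := u6_move a b hba (-v) (-p)
        refine ⟨-p, v', ?_⟩
        calc (a ^ p * b ^ v)⁻¹ = b ^ (-v) * a ^ (-p) := by
              rw [mul_inv_rev, zpow_neg, zpow_neg]
          _ = a ^ (-p) * b ^ v' := hv' }
  intro g
  have hle : Subgroup.closure {a, b} ≤ S := by
    rw [Subgroup.closure_le]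
    rintro x (rfl | rfl)
    · exact ⟨1, 0, by simp⟩
    · exact ⟨0, 1, by simp⟩
  exact hle (hgen ▸ Subgroup.mem_top g)


variable [Fintype G]

lemma u6_zpow_val (x : G) (p : ℤ) : x ^ p = x ^ ((p : ZMod (orderOf x)).val) := by
  haveI : NeZero (orderOf x) := ⟨(orderOf_pos x).ne'⟩
  have h1 : x ^ p = x ^ (p % (orderOf x : ℤ)) := by
    rw [zpow_eq_zpow_iff_modEq]
    exact (Int.emod_emod_of_dvd p dvd_rfl).symm
  rw [h1, ← ZMod.val_intCast (n := orderOf x) p, zpow_natCast]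

lemma u6_key (n : ℕ) (hn : 1 ≤ n) (a b : G) (ha : a ^ (2 * n) = 1) (hb : b ^ 3 = 1)
    (hba : b * a = a * b⁻¹) (hcard : Fintype.card G = 6 * n)
    (hgen : Subgroup.closure {a, b} = ⊤) :
    ∀ p v : ℤ, a ^ p * b ^ v = 1 → ((2 * n : ℕ) : ℤ) ∣ p ∧ (3 : ℤ) ∣ v := by
  have hsurj := u6_surj a b hba hgen
  haveI : NeZero (orderOf a) := ⟨(orderOf_pos a).ne'⟩
  haveI : NeZero (orderOf b) := ⟨(orderOf_pos b).ne'⟩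
  set F : ZMod (orderOf a) × ZMod (orderOf b) → G :=
    fun pr => a ^ pr.1.val * b ^ pr.2.val with hF
  have hFsurj : Function.Surjective F := by
    intro g
    obtain ⟨p, v, rfl⟩ := hsurj g
    exact ⟨((p : ZMod (orderOf a)), (v : ZMod (orderOf b))),
      by rw [hF]; dsimp only; rw [← u6_zpow_val a p, ← u6_zpow_val b v]⟩
  have hcard2 : Fintype.card G ≤ orderOf a * orderOf b := by
    have h := Fintype.card_le_of_surjective F hFsurj
    simpa [ZMod.card] using h
  have hda : orderOf a ∣ 2 * n := orderOf_dvd_of_pow_eq_one ha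
  have hdb : orderOf b ∣ 3 := orderOf_dvd_of_pow_eq_one hb
  have hale : orderOf a ≤ 2 * n := Nat.le_of_dvd (by omega) hda
  have hb13 : orderOf b = 1 ∨ orderOf b = 3 := Nat.prime_three.eq_one_or_self_of_dvd _ hdb
  obtain ⟨hA, hB⟩ : orderOf a = 2 * n ∧ orderOf b = 3 := by
    rw [hcard] at hcard2
    rcases hb13 with h | h <;> rw [h] at hcard2 <;> omega
  have hcards : Fintype.card (ZMod (orderOf a) × ZMod (orderOf b)) = Fintype.card G := by
    simp only [Fintype.card_prod, ZMod.card, hA, hB, hcard]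
    ring
  have hFinj : Function.Injective F :=
    ((Fintype.bijective_iff_surjective_and_card F).2 ⟨hFsurj, hcards⟩).1
  intro p v hpv
  have h0 : F ((p : ZMod (orderOf a)), (v : ZMod (orderOf b))) = F (0, 0) := by
    rw [hF]; dsimp only
    rw [← u6_zpow_val a p, ← u6_zpow_val b v, ZMod.val_zero, ZMod.val_zero,
      pow_zero, pow_zero, mul_one, hpv]
  have h1 := hFinj h0
  rw [Prod.mk.injEq] at h1
  obtain ⟨hp1, hv1⟩ := h1
  constructor
  · have := (ZMod.intCast_zmod_eq_zero_iff_dvd p (orderOf a)).1 hp1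
    rwa [hA] at this
  · have := (ZMod.intCast_zmod_eq_zero_iff_dvd v (orderOf b)).1 hv1
    rw [hB] at this
    exact_mod_cast this

lemma u6_eq_iff (n : ℕ) (a b : G) (ha : a ^ (2 * n) = 1) (hb : b ^ 3 = 1)
    (key : ∀ p v : ℤ, a ^ p * b ^ v = 1 → ((2 * n : ℕ) : ℤ) ∣ p ∧ (3 : ℤ) ∣ v) :
    ∀ p v q w : ℤ, a ^ p * b ^ v = a ^ q * b ^ w ↔
      ((2 * n : ℕ) : ℤ) ∣ (p - q) ∧ (3 : ℤ) ∣ (v - w) := by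
  intro p v q w
  constructor
  · intro h
    apply key
    calc a ^ (p - q) * b ^ (v - w) = a ^ (-q) * (a ^ p * b ^ v) * b ^ (-w) := by group
      _ = a ^ (-q) * (a ^ q * b ^ w) * b ^ (-w) := by rw [h]
      _ = 1 := by group
  · rintro ⟨⟨c1, hc1⟩, ⟨c2, hc2⟩⟩
    have ea : a ^ (p - q) = 1 := by
      rw [hc1, zpow_mul, show ((2 * n : ℕ) : ℤ) = ((2 * n : ℕ) : ℤ) from rfl,
        zpow_natCast, ha, one_zpow]
    have eb : b ^ (v - w) = 1 := by
      rw [hc2, zpow_mul, show (3 : ℤ) = ((3 : ℕ) : ℤ) by norm_num, zpow_natCast, hb, one_zpow]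
    have ea' : a ^ p = a ^ q := by
      have := ea
      rw [zpow_sub, mul_inv_eq_one] at this
      exact this
    have eb' : b ^ v = b ^ w := by
      have := eb
      rw [zpow_sub, mul_inv_eq_one] at this
      exact this
    rw [ea', eb']


end AuxU6n


/-- In `U_{6n}`, with `P_i = ⟨a^{2·3^i}b⟩` for `0 ≤ i ≤ k` and
`P_{k+1} = ⟨ab⟩`: for `0 ≤ i ≤ k+1` and `x ∈ P_i \ ⟨a⟩`, a vertex `y` is adjacent to `x`
in the enhanced power graph if and only if `y ∈ P_i` and `y ≠ x`. -/
theorem stmt_12 {G : Type*} [Group G] [Fintype G] (n k t : ℕ) (hn : 1 ≤ n)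
    (hnkt : n = 3 ^ k * t) (h3t : ¬ 3 ∣ t)
    (a b : G) (ha : a ^ (2 * n) = 1) (hb : b ^ 3 = 1) (hba : b * a = a * b⁻¹)
    (hcard : Fintype.card G = 6 * n) (hgen : Subgroup.closure {a, b} = ⊤)
    (P : ℕ → Subgroup G)
    (hP : ∀ i ≤ k, P i = Subgroup.zpowers (a ^ (2 * 3 ^ i) * b))
    (hPk1 : P (k + 1) = Subgroup.zpowers (a * b)) :
    ∀ i ≤ k + 1, ∀ x ∈ P i, x ∉ Subgroup.zpowers a →
      ∀ y : G, (enhancedPowerGraph G).Adj x y ↔ (y ∈ P i ∧ y ≠ x) := by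
  intro i hik x hxP hxa y
  have key := u6_key n hn a b ha hb hba hcard hgen
  have eqiff := u6_eq_iff n a b ha hb key
  have h3tz : ¬ (3:ℤ) ∣ (t:ℤ) := fun hh => h3t (by exact_mod_cast hh)
  have hcast : ((2 * n : ℕ) : ℤ) = 2 * ((3:ℤ)^k * (t:ℤ)) := by push_cast [hnkt]; ring
  have hamem : ∀ c : ℤ, a ^ c ∈ Subgroup.zpowers a :=
    fun c => Subgroup.zpow_mem _ (Subgroup.mem_zpowers a) c
  have hmv1 : b ^ (1:ℤ) * a ^ (2*(0:ℤ)+1) = a ^ (2*(0:ℤ)+1) * b ^ (-(1:ℤ)) :=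
    u6_move_odd a b hba 1 0
  have habform : (a * b : G) = a ^ (2*(0:ℤ)+1) * b ^ (1:ℤ) := by norm_num
  constructor
  · rintro ⟨hne, z, hxz, hyz⟩
    obtain ⟨e, hxe⟩ := Subgroup.mem_zpowers_iff.1 hxz
    obtain ⟨p, v, hzpv⟩ := u6_surj a b hba hgen z
    suffices hzP : z ∈ P i by
      obtain ⟨f, hf⟩ := Subgroup.mem_zpowers_iff.1 hyz
      exact ⟨hf ▸ Subgroup.zpow_mem _ hzP f, Ne.symm hne⟩
    rcases Nat.lt_or_ge i (k+1) with hik' | hik'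
    · -- case i ≤ k
      have hik2 : i ≤ k := by omega
      rw [hP i hik2] at hxP ⊢
      obtain ⟨m, hxm⟩ := Subgroup.mem_zpowers_iff.1 hxP
      have hgform : (a ^ (2 * 3 ^ i) * b : G) = a ^ (2 * (3:ℤ)^i) * b ^ (1:ℤ) := by
        rw [zpow_one, ← zpow_natCast a (2 * 3 ^ i)]
        congr 1
      have hgpow : ∀ w : ℤ, (a ^ (2 * 3 ^ i) * b : G) ^ w = a ^ (2 * (3:ℤ)^i * w) * b ^ w := by
        intro w
        rw [hgform, u6_pow_even a b hba ((3:ℤ)^i) 1 w, one_mul]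
      have hxm' : a ^ (2 * (3:ℤ)^i * m) * b ^ m = x := (hgpow m).symm.trans hxm
      have h3m : ¬ (3:ℤ) ∣ m := by
        rintro ⟨c, hc⟩
        apply hxa
        rw [← hxm', hc]
        have hbc : b ^ (3 * c : ℤ) = 1 := by
          rw [zpow_mul, show (3:ℤ) = ((3:ℕ):ℤ) by norm_num, zpow_natCast, hb, one_zpow]
        rw [hbc, mul_one]
        exact hamem _
      rcases Int.even_or_odd p with ⟨u, hu⟩ | ⟨u, hu⟩
      · -- p even : success case
        have hzf : z = a ^ (2*u) * b ^ v := by rw [hzpv, show p = 2*u by omega]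
        have hze : a ^ (2*u*e) * b ^ (v*e) = x := by
          rw [← u6_pow_even a b hba u v e, ← hzf]; exact hxe
        have hEq : a ^ (2 * (3:ℤ)^i * m) * b ^ m = a ^ (2*u*e) * b ^ (v*e) :=
          hxm'.trans hze.symm
        obtain ⟨hd1, hd2⟩ := (eqiff _ _ _ _).1 hEq
        obtain ⟨c1, hc1⟩ := hd1
        rw [hcast] at hc1
        have hd1' : ((3:ℤ)^k * (t:ℤ)) ∣ ((3:ℤ)^i * m - u * e) := ⟨c1, by linarith⟩
        obtain ⟨w, hw1, hw2⟩ := u6_arith k i hik2 (t:ℤ) h3tz u v e m h3m hd1' hd2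
        rw [Subgroup.mem_zpowers_iff]
        refine ⟨w, ?_⟩
        rw [hgpow w, hzf, eqiff]
        obtain ⟨c2, hc2⟩ := hw1
        refine ⟨⟨c2, ?_⟩, hw2⟩
        rw [hcast]
        linarith
      · -- p odd : contradictions
        exfalso
        have hzf : z = a ^ (2*u+1) * b ^ v := by rw [hzpv, hu]
        have hmv : b ^ v * a ^ (2*u+1) = a ^ (2*u+1) * b ^ (-v) := u6_move_odd a b hba v u
        rcases Int.even_or_odd e with ⟨q, hq⟩ | ⟨q, hq⟩
        · have hq2 : e = 2*q := by omega
          have hze : a ^ ((2*u+1)*(2*q)) * b ^ (0:ℤ) = x := by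
            rw [zpow_zero, mul_one, ← (u6_pow_odd a b (2*u+1) v hmv q).1, ← hzf, ← hq2]
            exact hxe
          obtain ⟨-, hd2⟩ := (eqiff _ _ _ _).1 (hxm'.trans hze.symm)
          rw [sub_zero] at hd2
          exact h3m hd2
        · have hq2 : e = 2*q+1 := by omega
          have hze : a ^ ((2*u+1)*(2*q)+(2*u+1)) * b ^ v = x := by
            rw [← (u6_pow_odd a b (2*u+1) v hmv q).2, ← hzf, ← hq2]
            exact hxe
          obtain ⟨hd1, -⟩ := (eqiff _ _ _ _).1 (hxm'.trans hze.symm)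
          obtain ⟨c1, hc1⟩ := hd1
          rw [hcast] at hc1
          have h2 : (2:ℤ) ∣ 1 :=
            ⟨(3:ℤ)^i*m - 2*u*q - q - u - ((3:ℤ)^k * (t:ℤ))*c1, by linarith⟩
          norm_num at h2
    · -- case i = k+1
      have hieq : i = k + 1 := by omega
      subst hieq
      rw [hPk1] at hxP ⊢
      obtain ⟨m, hxm⟩ := Subgroup.mem_zpowers_iff.1 hxP
      rcases Int.even_or_odd m with ⟨q0, hq0⟩ | ⟨q0, hq0⟩
      · exfalso
        apply hxa
        have hm2 : m = 2*q0 := by omega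
        rw [← hxm, hm2, habform, (u6_pow_odd a b _ _ hmv1 q0).1]
        exact hamem _
      · have hm2 : m = 2*q0+1 := by omega
        have hxm' : a ^ ((2*(0:ℤ)+1)*(2*q0)+(2*(0:ℤ)+1)) * b ^ (1:ℤ) = x := by
          rw [← (u6_pow_odd a b _ _ hmv1 q0).2, ← habform, ← hm2]
          exact hxm
        rcases Int.even_or_odd p with ⟨u, hu⟩ | ⟨u, hu⟩
        · exfalso
          have hzf : z = a ^ (2*u) * b ^ v := by rw [hzpv, show p = 2*u by omega]
          have hze : a ^ (2*u*e) * b ^ (v*e) = x := by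
            rw [← u6_pow_even a b hba u v e, ← hzf]; exact hxe
          obtain ⟨hd1, -⟩ := (eqiff _ _ _ _).1 (hxm'.trans hze.symm)
          obtain ⟨c1, hc1⟩ := hd1
          rw [hcast] at hc1
          have h2 : (2:ℤ) ∣ 1 :=
            ⟨((3:ℤ)^k * (t:ℤ))*c1 + u*e - q0, by linarith⟩
          norm_num at h2
        · have hzf : z = a ^ (2*u+1) * b ^ v := by rw [hzpv, hu]
          have hmv : b ^ v * a ^ (2*u+1) = a ^ (2*u+1) * b ^ (-v) := u6_move_odd a b hba v u
          rcases Int.even_or_odd e with ⟨q, hq⟩ | ⟨q, hq⟩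
          · exfalso
            have hq2 : e = 2*q := by omega
            have hze : a ^ ((2*u+1)*(2*q)) * b ^ (0:ℤ) = x := by
              rw [zpow_zero, mul_one, ← (u6_pow_odd a b (2*u+1) v hmv q).1, ← hzf, ← hq2]
              exact hxe
            obtain ⟨-, hd2⟩ := (eqiff _ _ _ _).1 (hxm'.trans hze.symm)
            norm_num at hd2
          · have hq2 : e = 2*q+1 := by omega
            have hze : a ^ ((2*u+1)*(2*q)+(2*u+1)) * b ^ v = x := by
              rw [← (u6_pow_odd a b (2*u+1) v hmv q).2, ← hzf, ← hq2]
              exact hxe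
            obtain ⟨-, hd2⟩ := (eqiff _ _ _ _).1 (hxm'.trans hze.symm)
            rw [Subgroup.mem_zpowers_iff]
            refine ⟨2*u+1, ?_⟩
            rw [habform, (u6_pow_odd a b _ _ hmv1 u).2, hzf, eqiff]
            exact ⟨⟨0, by ring⟩, hd2⟩
  · rintro ⟨hyP, hyne⟩
    obtain ⟨g, hg⟩ : ∃ g : G, P i = Subgroup.zpowers g := by
      rcases Nat.lt_or_ge i (k+1) with h | h
      · exact ⟨_, hP i (by omega)⟩
      · exact ⟨a * b, by rw [show i = k+1 by omega]; exact hPk1⟩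
    exact ⟨fun h => hyne h.symm, g, hg ▸ hxP, hg ▸ hyP⟩
end
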